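/- arXiv:1308.6477 — 8 statements merged into one kernel-verified Lean document; each statement's English description precedes it below -/
import Mathlib

section
/- Let a be a real number that is not zero or a negative integer. Then the function z ↦ φ(a, z) = Σ_{n≥0} (−1)^n z^{2n}/(a)_{2n} is entire (differentiable on all of ℂ), and it has exponential type exactly 1: for every ε > 0 there exists C > 0 such that |φ(a, z)| ≤ C·exp((1+ε)|z|) for all z ∈ ℂ, while for every ε ∈ (0,1) there is no constant C > 0 with |φ(a, z)| ≤ C·exp((1−ε)|z|) for all z ∈ ℂ. -/
open Real

section Hidden
open Filter Finset Nat
set_option maxHeartbeats 1000000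


lemma poch_ne_zero {a : ℝ} (ha : ∀ k : ℕ, a ≠ -(k : ℝ)) :
    ∀ n, (ascPochhammer ℝ n).eval a ≠ 0 := by
  intro n
  induction n with
  | zero => simp
  | succ n ih =>
    rw [ascPochhammer_succ_eval]
    refine mul_ne_zero ih fun h => ha n (by linarith)

lemma growth_of_ratio {u : ℕ → ℝ} (hu : ∀ n, u n ≠ 0)
    (h : Filter.Tendsto (fun n => |u (n + 1)| / |u n|) atTop (nhds 1))
    {ρ : ℝ} (hρ : 1 < ρ) :
    ∃ C : ℝ, 0 < C ∧ ∀ n, |u n| ≤ C * ρ ^ n := by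
  have hρ0 : 0 < ρ := lt_trans one_pos hρ
  obtain ⟨N, hN⟩ := eventually_atTop.mp (h.eventually_lt_const hρ)
  have step : ∀ n, N ≤ n → |u (n + 1)| ≤ ρ * |u n| := fun n hn =>
    le_of_lt ((div_lt_iff₀ (abs_pos.2 (hu n))).1 (hN n hn))
  have geo : ∀ k, |u (N + k)| ≤ |u N| * ρ ^ k := by
    intro k
    induction k with
    | zero => simp
    | succ k ih =>
      have h1 : |u (N + k + 1)| ≤ ρ * |u (N + k)| := step _ (Nat.le_add_right _ _)
      calc |u (N + (k + 1))| = |u (N + k + 1)| := by ring_nf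
        _ ≤ ρ * |u (N + k)| := h1
        _ ≤ ρ * (|u N| * ρ ^ k) := by nlinarith [abs_nonneg (u (N + k))]
        _ = |u N| * ρ ^ (k + 1) := by ring
  set C := ∑ j ∈ Finset.range (N + 1), |u j| / ρ ^ j with hCdef
  have hC : 0 < C :=
    Finset.sum_pos (fun j _ => div_pos (abs_pos.2 (hu j)) (pow_pos hρ0 j)) ⟨0, by simp⟩
  have hle : ∀ j, j ≤ N → |u j| ≤ C * ρ ^ j := by
    intro j hj
    have h1 : |u j| / ρ ^ j ≤ C :=
      Finset.single_le_sum (f := fun i => |u i| / ρ ^ i)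
        (fun i _ => le_of_lt (div_pos (abs_pos.2 (hu i)) (pow_pos hρ0 i)))
        (Finset.mem_range.2 (Nat.lt_succ_of_le hj))
    calc |u j| = |u j| / ρ ^ j * ρ ^ j := by field_simp
      _ ≤ C * ρ ^ j := mul_le_mul_of_nonneg_right h1 (pow_nonneg hρ0.le j)
  refine ⟨C, hC, fun n => ?_⟩
  rcases le_or_gt n N with hn | hn
  · exact hle n hn
  · calc |u n| = |u (N + (n - N))| := by rw [Nat.add_sub_cancel' hn.le]
      _ ≤ |u N| * ρ ^ (n - N) := geo _
      _ ≤ C * ρ ^ N * ρ ^ (n - N) :=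
        mul_le_mul_of_nonneg_right (hle N le_rfl) (pow_nonneg hρ0.le _)
      _ = C * ρ ^ n := by rw [mul_assoc, ← pow_add, Nat.add_sub_cancel' hn.le]



lemma ratio_abs_tendsto (a : ℝ) :
    Filter.Tendsto (fun n : ℕ => |(a + n) / ((n : ℝ) + 1)|) atTop (nhds 1) := by
  have h : (fun n : ℕ => (a + n) / ((n : ℝ) + 1)) =
      fun n : ℕ => 1 + (a - 1) * (1 / ((n : ℝ) + 1)) := by
    funext n
    have hn : ((n : ℝ) + 1) ≠ 0 := by positivity
    field_simp
    ring
  have h2 : Filter.Tendsto (fun n : ℕ => (a + n) / ((n : ℝ) + 1)) atTop (nhds 1) := by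
    rw [h]
    have := (tendsto_const_nhds : Filter.Tendsto (fun _ : ℕ => (1:ℝ)) atTop (nhds 1))
    simpa using this.add (tendsto_one_div_add_atTop_nhds_zero_nat.const_mul (a - 1))
  simpa using h2.abs

lemma b_ratio {a : ℝ} (ha : ∀ k : ℕ, a ≠ -(k : ℝ)) (n : ℕ) :
    ((ascPochhammer ℝ (n + 1)).eval a / (n + 1)!) / ((ascPochhammer ℝ n).eval a / n !) =
      (a + n) / ((n : ℝ) + 1) := by
  have hP := poch_ne_zero ha n
  have hf : ((n)! : ℝ) ≠ 0 := by positivity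
  rw [ascPochhammer_succ_eval, Nat.factorial_succ]
  push_cast
  field_simp

lemma poch_upper {a : ℝ} (ha : ∀ k : ℕ, a ≠ -(k : ℝ)) {ρ : ℝ} (hρ : 1 < ρ) :
    ∃ C : ℝ, 0 < C ∧ ∀ n, |(ascPochhammer ℝ n).eval a| ≤ C * ρ ^ n * n ! := by
  set b : ℕ → ℝ := fun n => (ascPochhammer ℝ n).eval a / n ! with hb
  have hb0 : ∀ n, b n ≠ 0 := fun n =>
    div_ne_zero (poch_ne_zero ha n) (by positivity)
  have ht : Filter.Tendsto (fun n => |b (n + 1)| / |b n|) atTop (nhds 1) := by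
    have : (fun n => |b (n + 1)| / |b n|) = fun n : ℕ => |(a + n) / ((n : ℝ) + 1)| := by
      funext n
      rw [← abs_div, b_ratio ha n]
    rw [this]
    exact ratio_abs_tendsto a
  obtain ⟨C, hC, hCb⟩ := growth_of_ratio hb0 ht hρ
  refine ⟨C, hC, fun n => ?_⟩
  have h1 : |b n| = |(ascPochhammer ℝ n).eval a| / n ! := by
    rw [hb, abs_div, abs_of_pos (α := ℝ) (by positivity : (0:ℝ) < (n ! : ℝ))]
  have h2 := hCb n
  rw [h1, div_le_iff₀ (by positivity : (0:ℝ) < (n ! : ℝ))] at h2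
  linarith


lemma poch_lower {a : ℝ} (ha : ∀ k : ℕ, a ≠ -(k : ℝ)) {ρ : ℝ} (hρ : 1 < ρ) :
    ∃ C : ℝ, 0 < C ∧ ∀ n, (n ! : ℝ) ≤ C * ρ ^ n * |(ascPochhammer ℝ n).eval a| := by
  set u : ℕ → ℝ := fun n => (n ! : ℝ) / (ascPochhammer ℝ n).eval a with hu
  have hu0 : ∀ n, u n ≠ 0 := fun n =>
    div_ne_zero (by positivity) (poch_ne_zero ha n)
  have hkey : ∀ x y : ℝ, x⁻¹ / y⁻¹ = (x / y)⁻¹ := fun x y => by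
    simp [div_eq_mul_inv, mul_inv, inv_inv, mul_comm]
  have ht : Filter.Tendsto (fun n => |u (n + 1)| / |u n|) atTop (nhds 1) := by
    have heq : (fun n => |u (n + 1)| / |u n|) =
        fun n : ℕ => |(a + n) / ((n : ℝ) + 1)|⁻¹ := by
      funext n
      rw [← abs_div, hu]
      simp only
      rw [← inv_div ((ascPochhammer ℝ (n+1)).eval a) ((n+1)! : ℝ),
        ← inv_div ((ascPochhammer ℝ n).eval a) ((n)! : ℝ), hkey, b_ratio ha n, abs_inv]
    rw [heq]
    simpa using (ratio_abs_tendsto a).inv₀ one_ne_zero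
  obtain ⟨C, hC, hCb⟩ := growth_of_ratio hu0 ht hρ
  refine ⟨C, hC, fun n => ?_⟩
  have h1 : |u n| = (n ! : ℝ) / |(ascPochhammer ℝ n).eval a| := by
    rw [hu, abs_div, abs_of_pos (α := ℝ) (by positivity : (0:ℝ) < (n ! : ℝ))]
  have h2 := hCb n
  rw [h1, div_le_iff₀ (abs_pos.2 (poch_ne_zero ha n))] at h2
  linarith

lemma two_mul_inj : Function.Injective (fun n : ℕ => 2 * n) := by
  intro n m h
  dsimp only at h
  omega

lemma summable_even_exp (x : ℝ) : Summable (fun n : ℕ => x ^ (2 * n) / (2 * n)!) :=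
  (Real.summable_pow_div_factorial x).comp_injective two_mul_inj

lemma real_exp_tsum (x : ℝ) : Real.exp x = ∑' m : ℕ, x ^ m / m ! := by
  rw [Real.exp_eq_exp_ℝ, NormedSpace.exp_eq_tsum_div]

lemma my_pow_div_fact_le_exp {x : ℝ} (hx : 0 ≤ x) (k : ℕ) :
    x ^ k / k ! ≤ Real.exp x := by
  rw [real_exp_tsum]
  exact Summable.le_tsum (Real.summable_pow_div_factorial x) k (fun i _ => by positivity)

lemma tsum_even_le_exp {x : ℝ} (hx : 0 ≤ x) :
    ∑' n : ℕ, x ^ (2 * n) / (2 * n)! ≤ Real.exp x := by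
  rw [real_exp_tsum]
  exact Summable.tsum_le_tsum_of_inj (fun n : ℕ => 2 * n) two_mul_inj
    (fun c _ => by positivity) (fun n => le_rfl) (summable_even_exp x)
    (Real.summable_pow_div_factorial x)

lemma hasSum_even_cosh (x : ℝ) :
    HasSum (fun n : ℕ => x ^ (2 * n) / (2 * n)!) (Real.cosh x) := by
  have h := Complex.hasSum_cos' (-((x : ℂ) * Complex.I))
  have e1 : -((x : ℂ) * Complex.I) * Complex.I = (x : ℂ) := by
    simp [mul_assoc, Complex.I_mul_I]
  have e2 : Complex.cos (-((x : ℂ) * Complex.I)) = Complex.cosh x := by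
    rw [Complex.cos_neg, Complex.cos_mul_I]
  rw [e1, e2] at h
  have h2 : HasSum (fun n : ℕ => ((x ^ (2 * n) / (2 * n)! : ℝ) : ℂ))
      ((Real.cosh x : ℂ)) := by
    rw [Complex.ofReal_cosh]
    convert h using 2 with n
    push_cast
    ring
  exact_mod_cast h2

lemma cosh_ge_half_exp (x : ℝ) : Real.exp x / 2 ≤ Real.cosh x := by
  rw [Real.cosh_eq]
  have := Real.exp_pos (-x)
  linarith

lemma norm_term (a : ℝ) (z : ℂ) (n : ℕ) :
    ‖(-1 : ℂ) ^ n * z ^ (2 * n) / (((ascPochhammer ℝ (2 * n)).eval a : ℝ) : ℂ)‖ =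
      ‖z‖ ^ (2 * n) / |(ascPochhammer ℝ (2 * n)).eval a| := by
  rw [norm_div, norm_mul, norm_pow, norm_pow]
  simp [Complex.norm_real]

lemma term_bound {a : ℝ} (ha : ∀ k : ℕ, a ≠ -(k : ℝ)) {ρ C₂ : ℝ} (hρ0 : 0 < ρ)
    (hC2 : ∀ m, (m ! : ℝ) ≤ C₂ * ρ ^ m * |(ascPochhammer ℝ m).eval a|)
    {x : ℝ} (hx : 0 ≤ x) (n : ℕ) :
    x ^ (2 * n) / |(ascPochhammer ℝ (2 * n)).eval a| ≤ C₂ * ((ρ * x) ^ (2 * n) / (2 * n)!) := by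
  have hP : 0 < |(ascPochhammer ℝ (2 * n)).eval a| := abs_pos.2 (poch_ne_zero ha (2 * n))
  have hf : (0 : ℝ) < (2 * n)! := by positivity
  rw [mul_div_assoc' C₂ _ _, div_le_div_iff₀ hP hf]
  have h := hC2 (2 * n)
  calc x ^ (2 * n) * ((2 * n)! : ℝ)
      ≤ x ^ (2 * n) * (C₂ * ρ ^ (2 * n) * |(ascPochhammer ℝ (2 * n)).eval a|) := by
        exact mul_le_mul_of_nonneg_left h (pow_nonneg hx _)
    _ = C₂ * (ρ * x) ^ (2 * n) * |(ascPochhammer ℝ (2 * n)).eval a| := by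
        rw [mul_pow]; ring

lemma tail_term {a : ℝ} (ha : ∀ k : ℕ, a ≠ -(k : ℝ)) {ρ C₂ β : ℝ} (hC₂pos : 0 < C₂)
    (hβ : 0 < β) (hβρ : β * ρ = 1)
    (hC2 : ∀ m, |(ascPochhammer ℝ m).eval a| ≤ C₂ * ρ ^ m * m !)
    {y : ℝ} (hy : 0 ≤ y) (m : ℕ) :
    C₂⁻¹ * ((β * y) ^ m / m !) ≤ y ^ m / |(ascPochhammer ℝ m).eval a| := by
  have hP : 0 < |(ascPochhammer ℝ m).eval a| := abs_pos.2 (poch_ne_zero ha m)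
  have hf : (0 : ℝ) < (m)! := by positivity
  rw [mul_div_assoc' C₂⁻¹ _ _, div_le_div_iff₀ hf hP]
  have h := hC2 m
  calc C₂⁻¹ * (β * y) ^ m * |(ascPochhammer ℝ m).eval a|
      ≤ C₂⁻¹ * (β * y) ^ m * (C₂ * ρ ^ m * m !) := by
        refine mul_le_mul_of_nonneg_left h (by positivity)
    _ = (C₂⁻¹ * C₂) * ((β * ρ) ^ m) * (y ^ m * (m)!) := by
        rw [mul_pow β y, mul_pow β ρ]; ring
    _ = y ^ m * (m)! := by
        rw [inv_mul_cancel₀ hC₂pos.ne', hβρ, one_pow, one_mul, one_mul]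

/-- Complex version of `phi`: `phiC a z = Σ_{n≥0} (−1)^n z^(2n)/(a)_{2n}`,
where `(a)_m` is the Pochhammer symbol of the real number `a`. -/
noncomputable def phiC (a : ℝ) (z : ℂ) : ℂ :=
  ∑' n : ℕ, (-1 : ℂ) ^ n * z ^ (2 * n) / (((ascPochhammer ℝ (2 * n)).eval a : ℝ) : ℂ)


-- Part 1 : differentiability
private theorem part1 (a : ℝ) (ha : ∀ k : ℕ, a ≠ -(k : ℝ)) : Differentiable ℂ (phiC a) := by
  obtain ⟨C₂, hC₂pos, hC₂⟩ := poch_lower ha one_lt_two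
  intro z0
  set R : ℝ := ‖z0‖ + 1 with hR
  have hR0 : 0 < R := by positivity
  have hsum : Summable (fun n : ℕ => C₂ * ((2 * R) ^ (2 * n) / (2 * n)!)) :=
    (summable_even_exp (2 * R)).mul_left C₂
  have hdiff : DifferentiableOn ℂ (phiC a) (Metric.ball 0 R) := by
    refine Complex.differentiableOn_tsum_of_summable_norm hsum
      (fun i => (((differentiable_pow (2 * i)).const_mul ((-1 : ℂ) ^ i)).div_const
        _).differentiableOn) Metric.isOpen_ball (fun i w hw => ?_)
    have hwR : ‖w‖ ≤ R := by
      have := mem_ball_iff_norm.mp hw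
      simp at this ⊢
      linarith [this]
    rw [norm_term a w i]
    calc ‖w‖ ^ (2 * i) / |(ascPochhammer ℝ (2 * i)).eval a|
        ≤ R ^ (2 * i) / |(ascPochhammer ℝ (2 * i)).eval a| := by
          gcongr
      _ ≤ C₂ * ((2 * R) ^ (2 * i) / (2 * i)!) :=
          term_bound ha two_pos hC₂ hR0.le i
  have hz0 : z0 ∈ Metric.ball (0 : ℂ) R := by
    simp [hR]
  exact (hdiff z0 hz0).differentiableAt (Metric.isOpen_ball.mem_nhds hz0)

-- Part 2 : upper bound
private theorem part2 (a : ℝ) (ha : ∀ k : ℕ, a ≠ -(k : ℝ)) (ε : ℝ) (hε : 0 < ε) :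
    ∃ C : ℝ, 0 < C ∧ ∀ z : ℂ, ‖phiC a z‖ ≤ C * Real.exp ((1 + ε) * ‖z‖) := by
  have hρ : 1 < 1 + ε := by linarith
  obtain ⟨C₂, hC₂pos, hC₂⟩ := poch_lower ha hρ
  refine ⟨C₂, hC₂pos, fun z => ?_⟩
  have hx : (0 : ℝ) ≤ ‖z‖ := norm_nonneg z
  have hbound : ∀ n : ℕ,
      ‖(-1 : ℂ) ^ n * z ^ (2 * n) / (((ascPochhammer ℝ (2 * n)).eval a : ℝ) : ℂ)‖ ≤
        C₂ * (((1 + ε) * ‖z‖) ^ (2 * n) / (2 * n)!) := by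
    intro n
    rw [norm_term a z n]
    exact term_bound ha (by linarith) hC₂ hx n
  have hsum2 : Summable (fun n : ℕ => C₂ * (((1 + ε) * ‖z‖) ^ (2 * n) / (2 * n)!)) :=
    (summable_even_exp _).mul_left C₂
  have hsumnorm : Summable (fun n : ℕ =>
      ‖(-1 : ℂ) ^ n * z ^ (2 * n) / (((ascPochhammer ℝ (2 * n)).eval a : ℝ) : ℂ)‖) :=
    Summable.of_nonneg_of_le (fun n => norm_nonneg _) hbound hsum2
  calc ‖phiC a z‖ ≤ ∑' n : ℕ,
        ‖(-1 : ℂ) ^ n * z ^ (2 * n) / (((ascPochhammer ℝ (2 * n)).eval a : ℝ) : ℂ)‖ :=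
        norm_tsum_le_tsum_norm hsumnorm
    _ ≤ ∑' n : ℕ, C₂ * (((1 + ε) * ‖z‖) ^ (2 * n) / (2 * n)!) :=
        Summable.tsum_le_tsum hbound hsumnorm hsum2
    _ = C₂ * ∑' n : ℕ, ((1 + ε) * ‖z‖) ^ (2 * n) / (2 * n)! := tsum_mul_left
    _ ≤ C₂ * Real.exp ((1 + ε) * ‖z‖) := by
        refine mul_le_mul_of_nonneg_left (tsum_even_le_exp (by positivity)) hC₂pos.le

private theorem part3 (a : ℝ) (ha : ∀ k : ℕ, a ≠ -(k : ℝ)) (ε : ℝ) (hε : 0 < ε) (hε1 : ε < 1) :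
    ¬ ∃ C : ℝ, 0 < C ∧ ∀ z : ℂ, ‖phiC a z‖ ≤ C * Real.exp ((1 - ε) * ‖z‖) := by
  rintro ⟨C, hC, hbound⟩
  set β : ℝ := 1 - ε / 2 with hβdef
  have hβpos : 0 < β := by rw [hβdef]; linarith
  have hβlt : β < 1 := by rw [hβdef]; linarith
  set γ : ℝ := (1 - ε + β) / 2 with hγdef
  have hγpos : 0 < γ := by rw [hγdef, hβdef]; linarith
  have hγltβ : γ < β := by rw [hγdef]; linarith
  have h1εγ : 1 - ε ≤ γ := by rw [hγdef]; linarith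
  set ρ : ℝ := β⁻¹ with hρdef
  have hβρ : β * ρ = 1 := mul_inv_cancel₀ hβpos.ne'
  have hρ1 : 1 < ρ := one_lt_inv_iff₀.2 ⟨hβpos, hβlt⟩
  clear_value β γ ρ
  obtain ⟨C₂, hC₂pos, hC₂⟩ := poch_upper ha hρ1
  obtain ⟨C₃, hC₃pos, hC₃⟩ := poch_lower ha one_lt_two
  obtain ⟨N₀, hN₀⟩ := exists_nat_gt (-a)
  have hsign : ∀ m : ℕ, N₀ ≤ m → 0 < a + m := by
    intro m hm
    have h2 : (N₀ : ℝ) ≤ m := Nat.cast_le.2 hm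
    linarith
  set P : ℕ → ℝ := fun n => (ascPochhammer ℝ n).eval a with hPdef
  have hP : ∀ n, P n ≠ 0 := poch_ne_zero ha
  set t : ℝ := if 0 < P N₀ then 1 else -1 with htdef
  have ht1 : t = 1 ∨ t = -1 := by rw [htdef]; split <;> simp
  have ht : ∀ m, N₀ ≤ m → 0 < t * P m := by
    intro m hm
    induction m, hm using Nat.le_induction with
    | base =>
      rcases lt_or_gt_of_ne (hP N₀) with h | h
      · rw [htdef, if_neg (not_lt.2 h.le)]; linarith
      · rw [htdef, if_pos h]; linarith
    | succ n hn ih =>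
      have h2 := hsign n hn
      have h3 : t * P (n + 1) = t * P n * (a + n) := by
        rw [hPdef]; simp only; rw [ascPochhammer_succ_eval]; ring
      rw [h3]; exact mul_pos ih h2
  have htabs : ∀ m, N₀ ≤ m → t * P m = |P m| := by
    intro m hm
    rcases ht1 with h | h
    · have hpos : 0 < P m := by have := ht m hm; rw [h, one_mul] at this; exact this
      rw [h, one_mul, abs_of_pos hpos]
    · have hneg : P m < 0 := by have := ht m hm; rw [h] at this; nlinarith
      rw [h, abs_of_neg hneg]; ring
  -- upper bound for |S y|
  have habsg : ∀ y : ℝ, 0 ≤ y → ∀ n : ℕ,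
      |y ^ (2 * n) / P (2 * n)| = y ^ (2 * n) / |P (2 * n)| := by
    intro y hy n
    rw [abs_div, abs_pow, abs_of_nonneg hy]
  have hgsum : ∀ y : ℝ, 0 ≤ y → Summable (fun n : ℕ => y ^ (2 * n) / P (2 * n)) := by
    intro y hy
    refine Summable.of_norm_bounded ((summable_even_exp (2 * y)).mul_left C₃) ?_
    intro n
    rw [Real.norm_eq_abs, habsg y hy n]
    exact term_bound ha two_pos hC₃ hy n
  have hgabs_sum : ∀ y : ℝ, 0 ≤ y → Summable (fun n : ℕ => y ^ (2 * n) / |P (2 * n)|) := by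
    intro y hy
    refine Summable.of_nonneg_of_le (fun n => div_nonneg (pow_nonneg hy _) (abs_nonneg _))
      (term_bound ha two_pos hC₃ hy) ((summable_even_exp (2 * y)).mul_left C₃)
  have hkey : ∀ y : ℝ,
      phiC a ((y : ℂ) * Complex.I) = ((∑' n : ℕ, y ^ (2 * n) / P (2 * n) : ℝ) : ℂ) := by
    intro y
    rw [Complex.ofReal_tsum]
    unfold phiC
    congr 1
    funext n
    have hI : ((y : ℂ) * Complex.I) ^ (2 * n) = (-1 : ℂ) ^ n * (y : ℂ) ^ (2 * n) := by
      rw [mul_pow, pow_mul Complex.I 2 n, Complex.I_sq]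
      ring
    have h2 : ((-1 : ℂ)) ^ n * ((-1 : ℂ) ^ n * (y : ℂ) ^ (2 * n)) = (y : ℂ) ^ (2 * n) := by
      rw [← mul_assoc, ← pow_add, ← two_mul, pow_mul]
      norm_num
    rw [hI, h2]
    push_cast
    ring
  have hupper : ∀ y : ℝ, 0 ≤ y →
      |∑' n : ℕ, y ^ (2 * n) / P (2 * n)| ≤ C * Real.exp ((1 - ε) * y) := by
    intro y hy
    have h := hbound ((y : ℂ) * Complex.I)
    rw [hkey y, Complex.norm_real, Real.norm_eq_abs, norm_mul, Complex.norm_I, mul_one,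
      Complex.norm_real, Real.norm_eq_abs, abs_of_nonneg hy] at h
    exact h
  -- lower bound
  have hlow : ∀ y : ℝ, 0 ≤ y →
      C₂⁻¹ * (Real.exp (β * y) / 2)
        - C₂⁻¹ * (∑ m ∈ Finset.range N₀, (β * y) ^ (2 * m) / (2 * m)!)
        - (∑ i ∈ Finset.range N₀, y ^ (2 * i) / |P (2 * i)|)
      ≤ t * ∑' n : ℕ, y ^ (2 * n) / P (2 * n) := by
    intro y hy
    have hβy : (0 : ℝ) ≤ β * y := by positivity
    have hsplit := Summable.sum_add_tsum_nat_add (f := fun n : ℕ => y ^ (2 * n) / P (2 * n)) N₀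
      (hgsum y hy)
    have hmulsplit : t * ∑' n : ℕ, y ^ (2 * n) / P (2 * n) =
        (∑ i ∈ Finset.range N₀, t * (y ^ (2 * i) / P (2 * i)))
          + ∑' n : ℕ, t * (y ^ (2 * (n + N₀)) / P (2 * (n + N₀))) := by
      rw [← hsplit, mul_add, Finset.mul_sum, tsum_mul_left]
    have hterm : ∀ n : ℕ, t * (y ^ (2 * (n + N₀)) / P (2 * (n + N₀))) =
        y ^ (2 * (n + N₀)) / |P (2 * (n + N₀))| := by
      intro n
      have hm : N₀ ≤ 2 * (n + N₀) := by omega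
      rw [← htabs _ hm]
      rcases ht1 with h | h <;> rw [h] <;> ring
    have htail_low : C₂⁻¹ * ((Real.cosh (β * y))
          - ∑ m ∈ Finset.range N₀, (β * y) ^ (2 * m) / (2 * m)!)
        ≤ ∑' n : ℕ, t * (y ^ (2 * (n + N₀)) / P (2 * (n + N₀))) := by
      have hsum1 : Summable (fun n : ℕ => (β * y) ^ (2 * (n + N₀)) / (2 * (n + N₀))!) :=
        (summable_nat_add_iff (f := fun m : ℕ => (β * y) ^ (2 * m) / (2 * m)!) N₀).2
          (summable_even_exp (β * y))
      have hsum2 : Summable (fun n : ℕ => y ^ (2 * (n + N₀)) / |P (2 * (n + N₀))|) :=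
        (summable_nat_add_iff (f := fun m : ℕ => y ^ (2 * m) / |P (2 * m)|) N₀).2
          (hgabs_sum y hy)
      have hle : ∀ n : ℕ, C₂⁻¹ * ((β * y) ^ (2 * (n + N₀)) / (2 * (n + N₀))!) ≤
          y ^ (2 * (n + N₀)) / |P (2 * (n + N₀))| := fun n =>
        tail_term ha hC₂pos hβpos hβρ hC₂ hy (2 * (n + N₀))
      have h1 : ∑' n : ℕ, C₂⁻¹ * ((β * y) ^ (2 * (n + N₀)) / (2 * (n + N₀))!) ≤
          ∑' n : ℕ, y ^ (2 * (n + N₀)) / |P (2 * (n + N₀))| :=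
        Summable.tsum_le_tsum hle (hsum1.mul_left _) hsum2
      have h2 : ∑' n : ℕ, C₂⁻¹ * ((β * y) ^ (2 * (n + N₀)) / (2 * (n + N₀))!) =
          C₂⁻¹ * ((Real.cosh (β * y))
            - ∑ m ∈ Finset.range N₀, (β * y) ^ (2 * m) / (2 * m)!) := by
        rw [tsum_mul_left]
        congr 1
        have hsplit2 := Summable.sum_add_tsum_nat_add (f := fun n : ℕ => (β * y) ^ (2 * n) / (2 * n)!)
          N₀ (summable_even_exp (β * y))
        rw [(hasSum_even_cosh (β * y)).tsum_eq] at hsplit2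
        linarith
      calc C₂⁻¹ * ((Real.cosh (β * y))
            - ∑ m ∈ Finset.range N₀, (β * y) ^ (2 * m) / (2 * m)!)
          = ∑' n : ℕ, C₂⁻¹ * ((β * y) ^ (2 * (n + N₀)) / (2 * (n + N₀))!) := h2.symm
        _ ≤ ∑' n : ℕ, y ^ (2 * (n + N₀)) / |P (2 * (n + N₀))| := h1
        _ = ∑' n : ℕ, t * (y ^ (2 * (n + N₀)) / P (2 * (n + N₀))) := by
            refine tsum_congr fun n => (hterm n).symm
    have hhead_low : -(∑ i ∈ Finset.range N₀, y ^ (2 * i) / |P (2 * i)|) ≤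
        ∑ i ∈ Finset.range N₀, t * (y ^ (2 * i) / P (2 * i)) := by
      rw [← Finset.sum_neg_distrib]
      refine Finset.sum_le_sum fun i _ => ?_
      have h1 : |t * (y ^ (2 * i) / P (2 * i))| = y ^ (2 * i) / |P (2 * i)| := by
        rw [abs_mul, habsg y hy i]
        rcases ht1 with h | h <;> rw [h] <;> norm_num
      calc -(y ^ (2 * i) / |P (2 * i)|) = -|t * (y ^ (2 * i) / P (2 * i))| := by rw [h1]
        _ ≤ t * (y ^ (2 * i) / P (2 * i)) := neg_abs_le _
    have hcosh := cosh_ge_half_exp (β * y)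
    have hC₂inv : (0 : ℝ) < C₂⁻¹ := by positivity
    rw [hmulsplit]
    have hmulcosh : C₂⁻¹ * (Real.exp (β * y) / 2) ≤ C₂⁻¹ * Real.cosh (β * y) :=
      mul_le_mul_of_nonneg_left hcosh hC₂inv.le
    have hexpand : C₂⁻¹ * ((Real.cosh (β * y))
          - ∑ m ∈ Finset.range N₀, (β * y) ^ (2 * m) / (2 * m)!) =
        C₂⁻¹ * Real.cosh (β * y)
          - C₂⁻¹ * (∑ m ∈ Finset.range N₀, (β * y) ^ (2 * m) / (2 * m)!) := by ring
    linarith [htail_low, hhead_low, hmulcosh, hexpand]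
  -- final contradiction
  set D₁ : ℝ := ∑ i ∈ Finset.range N₀, (2 * i)! / (γ ^ (2 * i) * |P (2 * i)|) with hD₁def
  set D₂ : ℝ := ∑ m ∈ Finset.range N₀, (β / γ) ^ (2 * m) with hD₂def
  have hD₁0 : 0 ≤ D₁ := Finset.sum_nonneg fun i _ => by positivity
  have hD₂0 : 0 ≤ D₂ := Finset.sum_nonneg fun m _ => by positivity
  have hH : ∀ y : ℝ, 0 ≤ y →
      (∑ i ∈ Finset.range N₀, y ^ (2 * i) / |P (2 * i)|) ≤ D₁ * Real.exp (γ * y) := by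
    intro y hy
    rw [hD₁def, Finset.sum_mul]
    refine Finset.sum_le_sum fun i _ => ?_
    have habsP : 0 < |P (2 * i)| := abs_pos.2 (hP (2 * i))
    have hfact : ((2 * i)! : ℝ) ≠ 0 := by positivity
    have h := my_pow_div_fact_le_exp (x := γ * y) (by positivity) (2 * i)
    calc y ^ (2 * i) / |P (2 * i)|
        = ((γ * y) ^ (2 * i) / (2 * i)!) * ((2 * i)! / (γ ^ (2 * i) * |P (2 * i)|)) := by
          rw [mul_pow]
          field_simp
      _ ≤ Real.exp (γ * y) * ((2 * i)! / (γ ^ (2 * i) * |P (2 * i)|)) := by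
          refine mul_le_mul_of_nonneg_right h (by positivity)
      _ = (2 * i)! / (γ ^ (2 * i) * |P (2 * i)|) * Real.exp (γ * y) := by ring
  have hE : ∀ y : ℝ, 0 ≤ y →
      (∑ m ∈ Finset.range N₀, (β * y) ^ (2 * m) / (2 * m)!) ≤ D₂ * Real.exp (γ * y) := by
    intro y hy
    rw [hD₂def, Finset.sum_mul]
    refine Finset.sum_le_sum fun m _ => ?_
    have hfact : ((2 * m)! : ℝ) ≠ 0 := by positivity
    have h := my_pow_div_fact_le_exp (x := γ * y) (by positivity) (2 * m)
    calc (β * y) ^ (2 * m) / (2 * m)!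
        = ((γ * y) ^ (2 * m) / (2 * m)!) * ((β / γ) ^ (2 * m)) := by
          rw [mul_pow, mul_pow, div_pow]
          field_simp
      _ ≤ Real.exp (γ * y) * ((β / γ) ^ (2 * m)) := by
          refine mul_le_mul_of_nonneg_right h (by positivity)
      _ = (β / γ) ^ (2 * m) * Real.exp (γ * y) := by ring
  have hC₂inv : (0 : ℝ) < C₂⁻¹ := by positivity
  set c₀ : ℝ := C₂⁻¹ / 2 with hc₀def
  have hc₀ : 0 < c₀ := by positivity
  set K : ℝ := C + C₂⁻¹ * D₂ + D₁ with hKdef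
  have hK : 0 < K := by
    have := mul_nonneg hC₂inv.le hD₂0
    linarith [hKdef]
  have hmain : ∀ y : ℝ, 0 ≤ y → c₀ * Real.exp (β * y) ≤ K * Real.exp (γ * y) := by
    intro y hy
    have h1 := hlow y hy
    have h2 := hupper y hy
    have h3 : t * (∑' n : ℕ, y ^ (2 * n) / P (2 * n)) ≤
        |∑' n : ℕ, y ^ (2 * n) / P (2 * n)| := by
      rcases ht1 with h | h <;> rw [h] <;>
        simp [neg_le_abs, le_abs_self]
    have h4 : Real.exp ((1 - ε) * y) ≤ Real.exp (γ * y) := by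
      refine Real.exp_le_exp.2 (mul_le_mul_of_nonneg_right h1εγ hy)
    have h5 := hH y hy
    have h6 := hE y hy
    have hmul4 : C * Real.exp ((1 - ε) * y) ≤ C * Real.exp (γ * y) :=
      mul_le_mul_of_nonneg_left h4 hC.le
    have hmul6 : C₂⁻¹ * (∑ m ∈ Finset.range N₀, (β * y) ^ (2 * m) / (2 * m)!) ≤
        C₂⁻¹ * (D₂ * Real.exp (γ * y)) := mul_le_mul_of_nonneg_left h6 hC₂inv.le
    have e1 : C₂⁻¹ * (Real.exp (β * y) / 2) = C₂⁻¹ / 2 * Real.exp (β * y) := by ring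
    have e2 : C₂⁻¹ * (D₂ * Real.exp (γ * y)) = C₂⁻¹ * D₂ * Real.exp (γ * y) := by ring
    have e3 : (C + C₂⁻¹ * D₂ + D₁) * Real.exp (γ * y) =
        C * Real.exp (γ * y) + C₂⁻¹ * D₂ * Real.exp (γ * y) + D₁ * Real.exp (γ * y) := by
      ring
    rw [hKdef, hc₀def]
    linarith [h1, h2, h3, hmul4, h5, hmul6, e1, e2, e3]
  set y : ℝ := max 0 (Real.log (K / c₀ + 1) / (β - γ)) with hydef
  have hy0 : 0 ≤ y := le_max_left _ _
  have hβγ : 0 < β - γ := by linarith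
  have hlog : Real.log (K / c₀ + 1) ≤ (β - γ) * y := by
    have h1 : Real.log (K / c₀ + 1) / (β - γ) ≤ y := le_max_right _ _
    calc Real.log (K / c₀ + 1) = (β - γ) * (Real.log (K / c₀ + 1) / (β - γ)) := by
          field_simp [hβγ.ne']
      _ ≤ (β - γ) * y := mul_le_mul_of_nonneg_left h1 hβγ.le
  have hKc : (0 : ℝ) < K / c₀ + 1 := by
    have h9 : (0 : ℝ) < K / c₀ := div_pos hK hc₀
    linarith
  have hexp1 : K / c₀ + 1 ≤ Real.exp ((β - γ) * y) := by
    calc K / c₀ + 1 = Real.exp (Real.log (K / c₀ + 1)) := (Real.exp_log hKc).symm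
      _ ≤ Real.exp ((β - γ) * y) := Real.exp_le_exp.2 hlog
  have hmainy := hmain y hy0
  have hsplitexp : Real.exp (β * y) = Real.exp ((β - γ) * y) * Real.exp (γ * y) := by
    rw [← Real.exp_add]
    congr 1
    ring
  rw [hsplitexp] at hmainy
  have hexpγ := Real.exp_pos (γ * y)
  rw [← mul_assoc] at hmainy
  have h7 : c₀ * Real.exp ((β - γ) * y) ≤ K := le_of_mul_le_mul_right hmainy hexpγ
  have h8 : Real.exp ((β - γ) * y) ≤ K / c₀ := by
    rw [le_div_iff₀ hc₀]
    linarith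
  linarith

end Hidden

theorem phiC_entire_exponential_type (a : ℝ) (ha : ∀ k : ℕ, a ≠ -(k : ℝ)) :
    Differentiable ℂ (phiC a) ∧
    (∀ ε : ℝ, 0 < ε → ∃ C : ℝ, 0 < C ∧
      ∀ z : ℂ, ‖phiC a z‖ ≤ C * Real.exp ((1 + ε) * ‖z‖)) ∧
    (∀ ε : ℝ, 0 < ε → ε < 1 → ¬ ∃ C : ℝ, 0 < C ∧
      ∀ z : ℂ, ‖phiC a z‖ ≤ C * Real.exp ((1 - ε) * ‖z‖)) :=
  ⟨part1 a ha, fun ε hε => part2 a ha ε hε, fun ε hε hε1 => part3 a ha ε hε hε1⟩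
end

section
/- Let a be a real number such that neither a nor a−1 is zero or a negative integer. Then for all real z, (a−1)·φ(a−1, z) = (a−1)·φ(a, z) + z·(∂/∂z)φ(a, z). -/
open Real

/-- `phi a z = Σ_{n≥0} (−1)^n z^(2n)/(a)_{2n}` where `(a)_m` is the Pochhammer symbol. -/
noncomputable def phi (a z : ℝ) : ℝ :=
  ∑' n : ℕ, (-1 : ℝ) ^ n * z ^ (2 * n) / (ascPochhammer ℝ (2 * n)).eval a

private lemma poch_ne {b : ℝ} (hb : ∀ k : ℕ, b ≠ -(k : ℝ)) (m : ℕ) :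
    (ascPochhammer ℝ m).eval b ≠ 0 := by
  intro h
  rw [ascPochhammer_eval_eq_zero_iff] at h
  obtain ⟨k, -, hk⟩ := h
  exact hb k (by linarith)

private lemma poch_rec (a : ℝ) : ∀ m : ℕ,
    (a - 1) * (ascPochhammer ℝ m).eval a = (a - 1 + m) * (ascPochhammer ℝ m).eval (a - 1) := by
  intro m
  induction m with
  | zero => simp
  | succ m ih =>
    rw [ascPochhammer_succ_eval, ascPochhammer_succ_eval]
    push_cast
    linear_combination (a + (m : ℝ)) * ih

private lemma poch_step (b : ℝ) (n : ℕ) :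
    (ascPochhammer ℝ (2 * (n + 1))).eval b
      = (ascPochhammer ℝ (2 * n)).eval b * ((b + 2 * n) * (b + (2 * n + 1))) := by
  rw [show 2 * (n + 1) = (2 * n + 1) + 1 by ring, ascPochhammer_succ_eval,
    ascPochhammer_succ_eval]
  push_cast
  ring

private lemma summable_u {b : ℝ} (hb : ∀ k : ℕ, b ≠ -(k : ℝ)) {R : ℝ} (hR : 1 ≤ R) :
    Summable (fun n : ℕ =>
      (2 * (n : ℝ) + 2) * R ^ (2 * n) / |(ascPochhammer ℝ (2 * n)).eval b|) := by
  have hRpos : 0 < R := lt_of_lt_of_le one_pos hR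
  have hcpos : ∀ m, 0 < |(ascPochhammer ℝ m).eval b| := fun m => abs_pos.mpr (poch_ne hb m)
  apply summable_of_ratio_norm_eventually_le (r := 1 / 2) (by norm_num)
  obtain ⟨N, hN⟩ := exists_nat_ge (8 * R ^ 2 + 1 - b)
  filter_upwards [Filter.eventually_ge_atTop N] with n hn
  have hPpos : 0 < |(ascPochhammer ℝ (2 * n)).eval b| := hcpos _
  set P := |(ascPochhammer ℝ (2 * n)).eval b| with hP
  have hA : 8 * R ^ 2 + 1 ≤ b + 2 * (n : ℝ) := by
    have h1 : (N : ℝ) ≤ n := Nat.cast_le.mpr hn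
    nlinarith [Nat.cast_nonneg (α := ℝ) n]
  have hApos : 0 < b + 2 * (n : ℝ) := by nlinarith
  have hBpos : (0 : ℝ) < b + (2 * n + 1) := by nlinarith
  have hstep : |(ascPochhammer ℝ (2 * (n + 1))).eval b|
      = P * ((b + 2 * n) * (b + (2 * n + 1))) := by
    rw [poch_step, abs_mul, abs_of_pos (mul_pos hApos hBpos)]
  rw [Real.norm_of_nonneg (by positivity), Real.norm_of_nonneg (by positivity), hstep]
  have hAB : 8 * R ^ 2 + 1 ≤ (b + 2 * (n : ℝ)) * (b + (2 * n + 1)) := by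
    nlinarith
  have key : (2 * ((n : ℝ) + 1) + 2) * R ^ 2
      ≤ ((n : ℝ) + 1) * ((b + 2 * (n : ℝ)) * (b + (2 * n + 1))) := by
    nlinarith [Nat.cast_nonneg (α := ℝ) n, sq_nonneg R]
  have hpow : R ^ (2 * (n + 1)) = R ^ (2 * n) * R ^ 2 := by
    rw [← pow_add]; ring_nf
  rw [div_le_iff₀ (by positivity), hpow]
  have h2 : (1 : ℝ) / 2 * ((2 * (n : ℝ) + 2) * R ^ (2 * n) / P)
        * (P * ((b + 2 * (n : ℝ)) * (b + (2 * n + 1))))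
      = R ^ (2 * n) * (((n : ℝ) + 1) * ((b + 2 * (n : ℝ)) * (b + (2 * n + 1)))) := by
    field_simp
  rw [h2]
  push_cast
  have h3 := mul_le_mul_of_nonneg_left key (show (0 : ℝ) ≤ R ^ (2 * n) by positivity)
  nlinarith [h3]

theorem phi_recurrence (a : ℝ) (ha : ∀ k : ℕ, a ≠ -(k : ℝ))
    (ha' : ∀ k : ℕ, a - 1 ≠ -(k : ℝ)) (z : ℝ) :
    (a - 1) * phi (a - 1) z = (a - 1) * phi a z + z * deriv (phi a) z := by
  set R : ℝ := |z| + 1 with hRdef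
  have hRpos : (0 : ℝ) < R := by positivity
  have hR : 1 ≤ R := by
    have := abs_nonneg z; rw [hRdef]; linarith
  have hzR : |z| < R := by rw [hRdef]; linarith
  have hcne : ∀ m, (ascPochhammer ℝ m).eval a ≠ 0 := poch_ne ha
  have hc'ne : ∀ m, (ascPochhammer ℝ m).eval (a - 1) ≠ 0 := poch_ne ha'
  have hcpos : ∀ m, 0 < |(ascPochhammer ℝ m).eval a| := fun m => abs_pos.mpr (hcne m)
  set u : ℕ → ℝ := fun n => (2 * (n : ℝ) + 2) * R ^ (2 * n) / |(ascPochhammer ℝ (2 * n)).eval a|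
    with hu_def
  have hu : Summable u := summable_u ha hR
  set f : ℕ → ℝ → ℝ := fun n y => (-1 : ℝ) ^ n * y ^ (2 * n) / (ascPochhammer ℝ (2 * n)).eval a
    with hf
  set f' : ℕ → ℝ → ℝ :=
    fun n y => (-1 : ℝ) ^ n * (((2 * n : ℕ) : ℝ) * y ^ (2 * n - 1))
      / (ascPochhammer ℝ (2 * n)).eval a with hf'
  have hg : ∀ n y, y ∈ Metric.ball (0 : ℝ) R → HasDerivAt (f n) (f' n y) y := by
    intro n y _
    exact ((hasDerivAt_pow (2 * n) y).const_mul ((-1 : ℝ) ^ n)).div_const _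
  have hbound : ∀ n y, |y| ≤ R → ‖f' n y‖ ≤ u n := by
    intro n y hy
    have h1 : ‖f' n y‖ = ((2 * n : ℕ) : ℝ) * |y| ^ (2 * n - 1)
        / |(ascPochhammer ℝ (2 * n)).eval a| := by
      simp [hf', abs_mul, abs_div, abs_pow, Nat.abs_cast]
    rw [h1, hu_def]
    have hy0 : (0 : ℝ) ≤ |y| := abs_nonneg y
    have hp1 : |y| ^ (2 * n - 1) ≤ R ^ (2 * n - 1) := pow_le_pow_left₀ hy0 hy _
    have hp2 : R ^ (2 * n - 1) ≤ R ^ (2 * n) := pow_le_pow_right₀ hR (by omega)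
    have hn1 : ((2 * n : ℕ) : ℝ) ≤ 2 * (n : ℝ) + 2 := by push_cast; linarith
    have hnum : ((2 * n : ℕ) : ℝ) * |y| ^ (2 * n - 1) ≤ (2 * (n : ℝ) + 2) * R ^ (2 * n) := by
      have hc1 : (0 : ℝ) ≤ ((2 * n : ℕ) : ℝ) := Nat.cast_nonneg _
      have hc2 : (0 : ℝ) ≤ R ^ (2 * n) := by positivity
      calc ((2 * n : ℕ) : ℝ) * |y| ^ (2 * n - 1)
          ≤ ((2 * n : ℕ) : ℝ) * R ^ (2 * n) :=
            mul_le_mul_of_nonneg_left (hp1.trans hp2) hc1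
        _ ≤ (2 * (n : ℝ) + 2) * R ^ (2 * n) := mul_le_mul_of_nonneg_right hn1 hc2
    exact div_le_div_of_nonneg_right hnum (hcpos _).le
  have hzball : z ∈ Metric.ball (0 : ℝ) R := by
    simp [Metric.mem_ball, Real.dist_eq, hzR]
  have hfz_sum : Summable (fun n => f n z) := by
    apply Summable.of_norm_bounded hu
    intro n
    have h1 : ‖f n z‖ = |z| ^ (2 * n) / |(ascPochhammer ℝ (2 * n)).eval a| := by
      simp [hf, abs_mul, abs_div, abs_pow]
    rw [h1, hu_def]
    have hp1 : |z| ^ (2 * n) ≤ R ^ (2 * n) := pow_le_pow_left₀ (abs_nonneg z) hzR.le _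
    have : |z| ^ (2 * n) ≤ (2 * (n : ℝ) + 2) * R ^ (2 * n) := by
      nlinarith [pow_nonneg (abs_nonneg z) (2 * n), Nat.cast_nonneg (α := ℝ) n,
        pow_nonneg hRpos.le (2 * n)]
    exact div_le_div_of_nonneg_right this (hcpos _).le
  have hf'_sum : Summable (fun n => f' n z) :=
    Summable.of_norm_bounded hu fun n => hbound n z hzR.le
  have hderiv : HasDerivAt (phi a) (∑' n, f' n z) z := by
    have H := hasDerivAt_tsum_of_isPreconnected hu Metric.isOpen_ball
      ((convex_ball (0 : ℝ) R).isPreconnected) hg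
      (fun n y hy => hbound n y (by
        have := Metric.mem_ball.mp hy
        rw [Real.dist_eq, sub_zero] at this
        exact this.le))
      hzball hfz_sum hzball
    exact H
  have hderiv_eq : deriv (phi a) z = ∑' n, f' n z := hderiv.deriv
  have hzf' : ∀ n, z * f' n z
      = (-1 : ℝ) ^ n * (((2 * n : ℕ) : ℝ) * z ^ (2 * n)) / (ascPochhammer ℝ (2 * n)).eval a := by
    intro n
    cases n with
    | zero => simp [hf']
    | succ m =>
      have e1 : 2 * (m + 1) - 1 = 2 * m + 1 := by omega
      have e2 : z ^ (2 * (m + 1)) = z ^ (2 * m + 1) * z := by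
        rw [show 2 * (m + 1) = (2 * m + 1) + 1 by ring, pow_succ]
      simp only [hf', e1]
      rw [e2]
      ring
  have termwise : ∀ n,
      (a - 1) * ((-1 : ℝ) ^ n * z ^ (2 * n) / (ascPochhammer ℝ (2 * n)).eval (a - 1))
        = (a - 1) * f n z + z * f' n z := by
    intro n
    rw [hzf' n]
    have key := poch_rec a (2 * n)
    have h1 := hcne (2 * n)
    have h2 := hc'ne (2 * n)
    simp only [hf]
    field_simp
    push_cast at key ⊢
    linear_combination (z ^ (2 * n)) * key

  have e1 : (a - 1) * phi (a - 1) z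
      = ∑' n, (a - 1) * ((-1 : ℝ) ^ n * z ^ (2 * n) / (ascPochhammer ℝ (2 * n)).eval (a - 1)) := by
    unfold phi
    exact tsum_mul_left.symm
  have hs1 : Summable (fun n => (a - 1) * f n z) := hfz_sum.mul_left _
  have hs2 : Summable (fun n => z * f' n z) := hf'_sum.mul_left _
  have e2 : (a - 1) * phi a z + z * deriv (phi a) z
      = ∑' n, ((a - 1) * f n z + z * f' n z) := by
    rw [hderiv_eq]
    have hpa : phi a z = ∑' n, f n z := rfl
    rw [hpa, ← tsum_mul_left, ← tsum_mul_left, Summable.tsum_add hs1 hs2]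
  rw [e1, e2]
  exact tsum_congr termwise
end

section
/- For every μ > 0 and every real z, z·φ(μ+2, z) = μ(μ+1)·∫₀¹ (1−t)^{μ−1}·sin(zt) dt. -/
open Real MeasureTheory

lemma ascPochhammer_eval_eq_prod (x : ℝ) (m : ℕ) :
    (ascPochhammer ℝ m).eval x = ∏ j ∈ Finset.range m, (x + j) := by
  induction m with
  | zero => simp
  | succ n ih => rw [ascPochhammer_succ_eval, ih, Finset.prod_range_succ]

lemma beta_nat (μ : ℝ) (hμ : 0 < μ) (k : ℕ) :
    ∫ t in (0:ℝ)..1, t ^ k * (1 - t) ^ (μ - 1) =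
      (k.factorial) / ∏ j ∈ Finset.range (k + 1), (μ + j) := by
  have hμ' : 0 < Complex.re (μ : ℂ) := by simpa using hμ
  have h1 : Complex.betaIntegral ((k : ℂ) + 1) μ =
      (k.factorial) / ∏ j ∈ Finset.range (k + 1), ((μ : ℂ) + j) := by
    rw [← Complex.betaIntegral_symm, Complex.betaIntegral_eval_nat_add_one_right hμ' k]
  have h2 : Complex.betaIntegral ((k : ℂ) + 1) μ =
      ((∫ t in (0:ℝ)..1, t ^ k * (1 - t) ^ (μ - 1) : ℝ) : ℂ) := by
    rw [Complex.betaIntegral, ← intervalIntegral.integral_ofReal]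
    apply intervalIntegral.integral_congr
    intro x hx
    rw [Set.uIcc_of_le zero_le_one] at hx
    obtain ⟨hx0, hx1⟩ := hx
    simp only
    rw [Complex.ofReal_mul, Complex.ofReal_pow,
      Complex.ofReal_cpow (by linarith : (0:ℝ) ≤ 1 - x)]
    push_cast
    rw [add_sub_cancel_right, Complex.cpow_natCast]
  have h3 : ((∫ t in (0:ℝ)..1, t ^ k * (1 - t) ^ (μ - 1) : ℝ) : ℂ) =
      (((k.factorial) / ∏ j ∈ Finset.range (k + 1), (μ + j) : ℝ) : ℂ) := by
    rw [← h2, h1]; push_cast; ring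
  exact_mod_cast h3

theorem phi_sin_integral (μ : ℝ) (hμ : 0 < μ) (z : ℝ) :
    z * phi (μ + 2) z =
      μ * (μ + 1) * ∫ t in (0:ℝ)..1, (1 - t) ^ (μ - 1) * Real.sin (z * t) := by
  set c : ℕ → ℝ := fun n => (-1 : ℝ) ^ n * z ^ (2 * n + 1) / ((2 * n + 1).factorial) with hc
  set F : ℕ → ℝ → ℝ := fun n t => c n * ((1 - t) ^ (μ - 1) * t ^ (2 * n + 1)) with hF
  have hμ1 : (-1 : ℝ) < μ - 1 := by linarith
  -- integrability of (1-t)^(μ-1)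
  have h1 : IntervalIntegrable (fun t : ℝ => (1 - t) ^ (μ - 1)) volume 0 1 := by
    have h := (intervalIntegral.intervalIntegrable_rpow' (a := 0) (b := 1) hμ1).comp_sub_left 1
    simpa using h.symm
  have hg : MeasureTheory.IntegrableOn (fun t : ℝ => (1 - t) ^ (μ - 1)) (Set.Ioc 0 1) :=
    (intervalIntegrable_iff_integrableOn_Ioc_of_le zero_le_one).mp h1
  have hFi : ∀ n, IntervalIntegrable (F n) volume 0 1 := by
    intro n
    exact (h1.mul_continuousOn (continuous_pow (2 * n + 1)).continuousOn).const_mul (c n)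
  have hInt : ∀ n, MeasureTheory.Integrable (F n)
      (MeasureTheory.volume.restrict (Set.Ioc (0:ℝ) 1)) := fun n =>
    (intervalIntegrable_iff_integrableOn_Ioc_of_le zero_le_one).mp (hFi n)
  -- summability of integrals of norms
  set A : ℝ := ∫ t in Set.Ioc (0:ℝ) 1, (1 - t) ^ (μ - 1) with hA
  have hbound : ∀ n, (∫ t in Set.Ioc (0:ℝ) 1, ‖F n t‖) ≤ |c n| * A := by
    intro n
    have hmono : (∫ t in Set.Ioc (0:ℝ) 1, ‖F n t‖) ≤
        ∫ t in Set.Ioc (0:ℝ) 1, |c n| * (1 - t) ^ (μ - 1) := by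
      apply MeasureTheory.integral_mono_ae (hInt n).norm (hg.const_mul |c n|)
      filter_upwards [MeasureTheory.ae_restrict_mem measurableSet_Ioc] with t ht
      obtain ⟨ht0, ht1⟩ := ht
      have h1t : (0:ℝ) ≤ 1 - t := by linarith
      have hrp : (0:ℝ) ≤ (1 - t) ^ (μ - 1) := Real.rpow_nonneg h1t _
      have : ‖F n t‖ = |c n| * ((1 - t) ^ (μ - 1) * t ^ (2 * n + 1)) := by
        rw [Real.norm_eq_abs, abs_mul, abs_mul, abs_of_nonneg hrp,
          abs_of_nonneg (pow_nonneg ht0.le _)]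
      rw [this]
      have hle : t ^ (2 * n + 1) ≤ 1 := pow_le_one₀ ht0.le ht1
      calc |c n| * ((1 - t) ^ (μ - 1) * t ^ (2 * n + 1))
          ≤ |c n| * ((1 - t) ^ (μ - 1) * 1) := by gcongr
        _ = |c n| * (1 - t) ^ (μ - 1) := by ring
    calc (∫ t in Set.Ioc (0:ℝ) 1, ‖F n t‖) ≤
        ∫ t in Set.Ioc (0:ℝ) 1, |c n| * (1 - t) ^ (μ - 1) := hmono
      _ = |c n| * A := by rw [MeasureTheory.integral_const_mul]
  have hcsum : Summable fun n => |c n| * A := by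
    have h0 : Summable fun n : ℕ => |z| ^ (2 * n + 1) / ((2 * n + 1).factorial) :=
      (Real.summable_pow_div_factorial |z|).comp_injective
        (by intro a b hab; simp only at hab; omega)
    apply (h0.mul_right A).congr
    intro n
    have : |c n| = |z| ^ (2 * n + 1) / ((2 * n + 1).factorial) := by
      rw [hc, abs_div, abs_mul, abs_pow, abs_neg, abs_one, one_pow, one_mul, abs_pow,
        Nat.abs_cast]
    rw [this]
  have hsum : Summable fun n => ∫ t in Set.Ioc (0:ℝ) 1, ‖F n t‖ :=
    Summable.of_nonneg_of_le
      (fun n => MeasureTheory.integral_nonneg fun t => norm_nonneg _) hbound hcsum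
  have hs := MeasureTheory.hasSum_integral_of_summable_integral_norm hInt hsum
  -- pointwise sum of the series
  have htsum : ∀ t : ℝ, (∑' n, F n t) = (1 - t) ^ (μ - 1) * Real.sin (z * t) := by
    intro t
    have heq : ∀ n, F n t = (1 - t) ^ (μ - 1) * ((-1 : ℝ) ^ n * (z * t) ^ (2 * n + 1)
        / ((2 * n + 1).factorial)) := by
      intro n; simp only [hF, hc]; rw [mul_pow]; ring
    rw [tsum_congr heq, tsum_mul_left, ← Real.sin_eq_tsum]
  -- the interval integral as a sum
  have hI : (∫ t in (0:ℝ)..1, (1 - t) ^ (μ - 1) * Real.sin (z * t)) =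
      ∑' n, ∫ t in Set.Ioc (0:ℝ) 1, F n t := by
    rw [intervalIntegral.integral_of_le zero_le_one]
    have : (∫ t in Set.Ioc (0:ℝ) 1, (1 - t) ^ (μ - 1) * Real.sin (z * t)) =
        ∫ t in Set.Ioc (0:ℝ) 1, ∑' n, F n t := by
      apply MeasureTheory.integral_congr_ae
      filter_upwards with t
      exact (htsum t).symm
    rw [this, ← hs.tsum_eq]
  -- value of each integral
  have hval : ∀ n, (∫ t in Set.Ioc (0:ℝ) 1, F n t) =
      c n * (((2 * n + 1).factorial) / ∏ j ∈ Finset.range (2 * n + 2), (μ + j)) := by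
    intro n
    rw [← intervalIntegral.integral_of_le zero_le_one]
    have : (∫ t in (0:ℝ)..1, F n t) =
        c n * ∫ t in (0:ℝ)..1, t ^ (2 * n + 1) * (1 - t) ^ (μ - 1) := by
      rw [← intervalIntegral.integral_const_mul]
      apply intervalIntegral.integral_congr
      intro x _; simp only [hF]; ring
    rw [this, beta_nat μ hμ (2 * n + 1)]
  rw [hI, phi, ← tsum_mul_left, ← tsum_mul_left]
  apply tsum_congr
  intro n
  rw [hval n]
  have hQ : (0:ℝ) < (ascPochhammer ℝ (2 * n)).eval (μ + 2) :=
    ascPochhammer_pos _ _ (by linarith)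
  have hP : (∏ j ∈ Finset.range (2 * n + 2), (μ + j)) =
      μ * (μ + 1) * (ascPochhammer ℝ (2 * n)).eval (μ + 2) := by
    rw [ascPochhammer_eval_eq_prod, Finset.prod_range_succ', Finset.prod_range_succ']
    push_cast
    rw [show (∏ j ∈ Finset.range (2 * n), (μ + ((j:ℝ) + 1 + 1))) =
      ∏ j ∈ Finset.range (2 * n), (μ + 2 + (j:ℝ)) from Finset.prod_congr rfl
        fun j _ => by ring]
    ring
  have hfac : (((2 * n + 1).factorial) : ℝ) ≠ 0 := by positivity
  rw [hP, hc]
  field_simp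
  ring
end

section
/- For every μ > 0 and every real z, φ(μ+1, z) = μ·∫₀¹ (1−t)^{μ−1}·cos(zt) dt. -/
open Real

open MeasureTheory intervalIntegral Finset Nat in
lemma ascPochhammer_eval_prod (x : ℝ) (n : ℕ) :
    (ascPochhammer ℝ n).eval x = ∏ i ∈ Finset.range n, (x + i) := by
  induction n with
  | zero => simp
  | succ n ih =>
    rw [ascPochhammer_succ_right, Polynomial.eval_mul, ih, Finset.prod_range_succ]
    simp

lemma beta_eval (μ : ℝ) (hμ : 0 < μ) (k : ℕ) :
    ∫ t in (0:ℝ)..1, (1 - t) ^ (μ - 1) * t ^ k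
      = (Nat.factorial k) / ∏ j ∈ Finset.range (k + 1), (μ + j) := by
  have hbeta : Complex.betaIntegral (k + 1) μ
      = ((Nat.factorial k) : ℂ) / ∏ j ∈ Finset.range (k + 1), ((μ : ℂ) + j) := by
    rw [← Complex.betaIntegral_symm,
      Complex.betaIntegral_eval_nat_add_one_right (by simpa using hμ) k]
  have hcast : Complex.betaIntegral (k + 1) μ
      = ((∫ t in (0:ℝ)..1, (1 - t) ^ (μ - 1) * t ^ k : ℝ) : ℂ) := by
    rw [Complex.betaIntegral, ← intervalIntegral.integral_ofReal]
    refine intervalIntegral.integral_congr fun x hx => ?_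
    rw [Set.uIcc_of_le (by norm_num : (0:ℝ) ≤ 1)] at hx
    obtain ⟨hx0, hx1⟩ := hx
    have h1 : ((k : ℂ) + 1) - 1 = (k : ℂ) := by ring
    rw [h1, Complex.cpow_natCast]
    have h2 : (1 - (x:ℂ)) ^ ((μ:ℂ) - 1) = (((1 - x) ^ (μ - 1) : ℝ) : ℂ) := by
      rw [Complex.ofReal_cpow (by linarith)]
      push_cast
      ring_nf
    rw [h2]
    push_cast
    ring
  have key := hcast.symm.trans hbeta
  have h3 : (((Nat.factorial k) : ℝ) / ∏ j ∈ Finset.range (k + 1), (μ + j) : ℝ)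
      = (((Nat.factorial k) : ℂ) / ∏ j ∈ Finset.range (k + 1), ((μ : ℂ) + j) : ℂ) := by
    push_cast
    ring
  exact Complex.ofReal_injective (key.trans h3.symm)

open MeasureTheory intervalIntegral Finset Nat in
theorem phi_cos_integral (μ : ℝ) (hμ : 0 < μ) (z : ℝ) :
    phi (μ + 1) z = μ * ∫ t in (0:ℝ)..1, (1 - t) ^ (μ - 1) * Real.cos (z * t) := by
  set F : ℕ → ℝ → ℝ := fun n t => (1 - t) ^ (μ - 1) * ((-1) ^ n * (z * t) ^ (2 * n) / (2 * n) !)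
    with hF
  -- integrability of the rpow factor
  have hg : IntervalIntegrable (fun t : ℝ => (1 - t) ^ (μ - 1)) volume 0 1 := by
    have := (intervalIntegrable_rpow' (a := 0) (b := 1) (r := μ - 1)
      (by linarith)).comp_sub_left 1
    simpa using this.symm
  have hgIoc : IntegrableOn (fun t : ℝ => (1 - t) ^ (μ - 1)) (Set.Ioc 0 1) volume := hg.1
  -- each F n is integrable on Ioc 0 1
  have hFint : ∀ n : ℕ, IntegrableOn (F n) (Set.Ioc 0 1) volume := by
    intro n
    have : IntervalIntegrable (F n) volume 0 1 :=
      hg.mul_continuousOn (Continuous.continuousOn (by fun_prop))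
    exact this.1
  -- exact value of each integral
  have hval : ∀ n : ℕ, ∫ t in Set.Ioc (0:ℝ) 1, F n t
      = (-1) ^ n * z ^ (2 * n) / ∏ j ∈ Finset.range (2 * n + 1), (μ + j) := by
    intro n
    rw [← intervalIntegral.integral_of_le (by norm_num : (0:ℝ) ≤ 1)]
    have : ∀ t : ℝ, F n t = ((-1) ^ n * z ^ (2 * n) / (2 * n) !)
        * ((1 - t) ^ (μ - 1) * t ^ (2 * n)) := by
      intro t; simp only [hF, mul_pow]; ring
    simp_rw [this]
    rw [intervalIntegral.integral_const_mul, beta_eval μ hμ (2 * n)]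
    have hfac : ((2 * n) ! : ℝ) ≠ 0 := by positivity
    field_simp
  -- norm bound
  have hnorm : ∀ n : ℕ, ∀ t ∈ Set.Ioc (0:ℝ) 1,
      ‖F n t‖ ≤ (1 - t) ^ (μ - 1) * (|z| ^ (2 * n) / (2 * n) !) := by
    intro n t ht
    obtain ⟨ht0, ht1⟩ := ht
    have h1 : (0:ℝ) ≤ (1 - t) ^ (μ - 1) := Real.rpow_nonneg (by linarith) _
    rw [hF]
    simp only [norm_mul, Real.norm_eq_abs, abs_of_nonneg h1]
    gcongr
    have ht' : |t| ≤ 1 := by rw [abs_of_pos ht0]; exact ht1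
    rw [abs_div, abs_mul, abs_pow, abs_pow, abs_neg, abs_one, one_pow, one_mul,
      abs_of_nonneg (by positivity : (0:ℝ) ≤ ((2*n) ! : ℝ)), abs_mul]
    have hb : (|z| * |t|) ^ (2 * n) ≤ |z| ^ (2 * n) := by
      calc (|z| * |t|) ^ (2 * n) ≤ (|z| * 1) ^ (2 * n) := by
            have : |z| * |t| ≤ |z| * 1 := by
              have := abs_nonneg z
              nlinarith [abs_nonneg t]
            exact pow_le_pow_left₀ (by positivity) this _
        _ = |z| ^ (2 * n) := by rw [mul_one]
    gcongr
  -- summability of integrals of norms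
  have hsum0 : Summable (fun n : ℕ => |z| ^ (2 * n) / (2 * n) !) := by
    have := (Real.summable_pow_div_factorial |z|).comp_injective
      (fun a b h => by simp only at h; omega : Function.Injective (fun n : ℕ => 2 * n))
    exact this
  have hint1 : ∫ t in Set.Ioc (0:ℝ) 1, (1 - t) ^ (μ - 1) = 1 / μ := by
    have := beta_eval μ hμ 0
    simp at this
    rw [← intervalIntegral.integral_of_le (by norm_num : (0:ℝ) ≤ 1)]
    simpa [one_div] using this
  have hsum : Summable (fun n : ℕ => ∫ t in Set.Ioc (0:ℝ) 1, ‖F n t‖) := by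
    apply Summable.of_nonneg_of_le
      (fun n => integral_nonneg fun t => norm_nonneg _)
      (fun n => ?_) (hsum0.mul_left (1 / μ))
    have hle : ∫ t in Set.Ioc (0:ℝ) 1, ‖F n t‖
        ≤ ∫ t in Set.Ioc (0:ℝ) 1, (1 - t) ^ (μ - 1) * (|z| ^ (2 * n) / (2 * n) !) := by
      apply integral_mono_of_nonneg
      · exact Filter.Eventually.of_forall fun t => norm_nonneg _
      · exact (hgIoc.mul_const _)
      · filter_upwards [ae_restrict_mem measurableSet_Ioc] with t ht
        exact hnorm n t ht
    calc ∫ t in Set.Ioc (0:ℝ) 1, ‖F n t‖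
        ≤ ∫ t in Set.Ioc (0:ℝ) 1, (1 - t) ^ (μ - 1) * (|z| ^ (2 * n) / (2 * n) !) := hle
      _ = 1 / μ * (|z| ^ (2 * n) / (2 * n) !) := by
          rw [MeasureTheory.integral_mul_const, hint1]
  -- swap sum and integral
  have hswap : ∑' n : ℕ, ∫ t in Set.Ioc (0:ℝ) 1, F n t
      = ∫ t in Set.Ioc (0:ℝ) 1, ∑' n : ℕ, F n t :=
    integral_tsum_of_summable_integral_norm hFint hsum
  -- pointwise sum
  have hpt : ∀ t : ℝ, ∑' n : ℕ, F n t = (1 - t) ^ (μ - 1) * Real.cos (z * t) := by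
    intro t
    exact ((Real.hasSum_cos (z * t)).mul_left _).tsum_eq
  -- put it together
  have hRHS : (∫ t in (0:ℝ)..1, (1 - t) ^ (μ - 1) * Real.cos (z * t))
      = ∑' n : ℕ, (-1) ^ n * z ^ (2 * n) / ∏ j ∈ Finset.range (2 * n + 1), (μ + j) := by
    rw [intervalIntegral.integral_of_le (by norm_num : (0:ℝ) ≤ 1)]
    simp_rw [← hpt]
    rw [← hswap]
    exact tsum_congr hval |>.symm ▸ rfl
  rw [hRHS, ← tsum_mul_left]
  unfold phi
  refine tsum_congr fun n => ?_
  rw [ascPochhammer_eval_prod, Finset.prod_range_succ']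
  have hP : (0:ℝ) < ∏ i ∈ Finset.range (2 * n), (μ + 1 + i) :=
    Finset.prod_pos fun i _ => by positivity
  have hprod : ∏ i ∈ Finset.range (2 * n), (μ + ↑(i + 1)) =
      ∏ i ∈ Finset.range (2 * n), (μ + 1 + i) :=
    Finset.prod_congr rfl fun i _ => by push_cast; ring
  rw [hprod]
  simp only [Nat.cast_zero, add_zero]
  field_simp
end

section
/- For every μ > 0 and every z > 0, √z · s_{μ−1/2, 1/2}(z) = ∫₀^z t^{μ−1}·sin(z−t) dt. -/
open Real

/-- Lommel function of the first kind `s_{ν,1/2}(z)`. -/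
noncomputable def lommel (ν z : ℝ) : ℝ :=
  z ^ (ν + 1) / ((ν + 1 / 2) * (ν + 3 / 2)) * phi (ν + 5 / 2) z

open MeasureTheory in
lemma poch_prod (m : ℕ) (a : ℝ) :
    (ascPochhammer ℝ m).eval a = ∏ j ∈ Finset.range m, (a + j) := by
  induction m with
  | zero => simp
  | succ n ih => rw [ascPochhammer_succ_eval, ih, Finset.prod_range_succ]

lemma poch_shift (m : ℕ) (a : ℝ) :
    (ascPochhammer ℝ (m + 2)).eval a = a * (a + 1) * (ascPochhammer ℝ m).eval (a + 2) := by
  induction m with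
  | zero => simp [ascPochhammer_succ_eval]
  | succ n ih =>
    rw [show n + 1 + 2 = (n + 2) + 1 from rfl, ascPochhammer_succ_eval, ih,
      ascPochhammer_succ_eval]
    push_cast
    ring

lemma beta_aux {μ z : ℝ} (hμ : 0 < μ) (hz : 0 < z) (n : ℕ) :
    ∫ t in (0:ℝ)..z, t ^ (μ - 1) * (z - t) ^ n
      = (n.factorial : ℝ) * z ^ (μ + n) / (ascPochhammer ℝ (n + 1)).eval μ := by
  have h1 := Complex.betaIntegral_scaled (μ : ℂ) ((n : ℂ) + 1) hz
  have h2 := Complex.betaIntegral_eval_nat_add_one_right (u := (μ : ℂ)) (by simpa using hμ) n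
  rw [h2] at h1
  have h3 : (∫ x in (0:ℝ)..z, (x : ℂ) ^ ((μ:ℂ) - 1) * ((z : ℂ) - x) ^ ((n:ℂ) + 1 - 1))
      = ((∫ t in (0:ℝ)..z, t ^ (μ - 1) * (z - t) ^ n : ℝ) : ℂ) := by
    rw [← intervalIntegral.integral_ofReal]
    refine intervalIntegral.integral_congr fun x hx => ?_
    have hx0 : 0 ≤ x := by
      rw [Set.uIcc_of_le hz.le] at hx; exact hx.1
    rw [add_sub_cancel_right, Complex.cpow_natCast]
    push_cast
    rw [show ((μ:ℂ) - 1) = ((μ - 1 : ℝ) : ℂ) by push_cast; ring,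
      ← Complex.ofReal_cpow hx0]
  rw [h3] at h1
  have h4 : ((μ:ℂ) + ((n:ℂ) + 1) - 1) = ((μ + n : ℝ) : ℂ) := by push_cast; ring
  rw [h4, ← Complex.ofReal_cpow hz.le] at h1
  have h5 : (∏ j ∈ Finset.range (n + 1), ((μ:ℂ) + (j:ℂ)))
      = (((ascPochhammer ℝ (n + 1)).eval μ : ℝ) : ℂ) := by
    rw [poch_prod]
    push_cast
    ring
  rw [h5] at h1
  have h6 : ((∫ t in (0:ℝ)..z, t ^ (μ - 1) * (z - t) ^ n : ℝ) : ℂ)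
      = (((n.factorial : ℝ) * z ^ (μ + n) / (ascPochhammer ℝ (n + 1)).eval μ : ℝ) : ℂ) := by
    rw [h1]; push_cast; ring
  exact_mod_cast h6

open MeasureTheory in
theorem sqrt_mul_lommel_eq_integral (μ : ℝ) (hμ : 0 < μ) (z : ℝ) (hz : 0 < z) :
    Real.sqrt z * lommel (μ - 1/2) z = ∫ t in (0:ℝ)..z, t ^ (μ - 1) * Real.sin (z - t) := by
  set P : ℕ → ℝ := fun m => (ascPochhammer ℝ m).eval μ with hP
  have hzz : z ^ ((1:ℝ)/2) * z ^ (μ + 1/2) = z ^ (μ + 1 : ℝ) := by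
    rw [← Real.rpow_add hz, show (1:ℝ)/2 + (μ + 1/2) = μ + 1 by ring]
  set T : ℕ → ℝ := fun k => (-1 : ℝ) ^ k * (z ^ (μ + 1 : ℝ) * z ^ (2 * k)) / P (2 * k + 2)
    with hT
  -- LHS equals the series T
  have hL : Real.sqrt z * lommel (μ - 1/2) z = ∑' k, T k := by
    rw [lommel, phi, show μ - 1/2 + 1/2 = μ by ring, show μ - 1/2 + 3/2 = μ + 1 by ring,
      show μ - 1/2 + 5/2 = μ + 2 by ring, show μ - 1/2 + 1 = μ + 1/2 by ring,
      Real.sqrt_eq_rpow, ← mul_assoc, ← tsum_mul_left]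
    refine tsum_congr fun k => ?_
    have hQ : (ascPochhammer ℝ (2 * k)).eval (μ + 2) ≠ 0 :=
      (ascPochhammer_pos _ _ (by linarith)).ne'
    rw [hT]
    simp only [hP]
    rw [poch_shift, ← hzz]
    field_simp
  -- the term functions
  set F : ℕ → ℝ → ℝ := fun k t =>
    t ^ (μ - 1) * ((-1 : ℝ) ^ k * (z - t) ^ (2 * k + 1) / ((2 * k + 1).factorial : ℝ)) with hF
  have hg : IntegrableOn (fun t : ℝ => t ^ (μ - 1)) (Set.Ioc 0 z) := by
    have h := intervalIntegral.intervalIntegrable_rpow' (a := 0) (b := z) (r := μ - 1)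
      (by linarith)
    rwa [intervalIntegrable_iff_integrableOn_Ioc_of_le hz.le] at h
  have hmeas : ∀ k, AEStronglyMeasurable (F k) (volume.restrict (Set.Ioc (0:ℝ) z)) := by
    intro k
    apply Measurable.aestronglyMeasurable
    fun_prop
  have key : ∀ k, ∀ t ∈ Set.Ioc (0:ℝ) z,
      ‖F k t‖ ≤ t ^ (μ - 1) * (z ^ (2 * k + 1) / ((2 * k + 1).factorial : ℝ)) := by
    intro k t ht
    have h1 : (0:ℝ) ≤ t ^ (μ - 1) := Real.rpow_nonneg ht.1.le _
    have hfac : (0:ℝ) < ((2 * k + 1).factorial : ℝ) := by positivity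
    rw [hF]
    rw [norm_mul, Real.norm_eq_abs, Real.norm_eq_abs, abs_of_nonneg h1, abs_div, abs_mul,
      abs_pow, abs_pow, abs_neg, abs_one, one_pow, one_mul, abs_of_pos hfac]
    gcongr
    rw [abs_of_nonneg (by linarith [ht.2] : (0:ℝ) ≤ z - t)]
    linarith [ht.1.le]
  have hFint : ∀ k, Integrable (F k) (volume.restrict (Set.Ioc (0:ℝ) z)) := by
    intro k
    refine Integrable.mono (hg.mul_const (z ^ (2 * k + 1) / ((2 * k + 1).factorial : ℝ)))
      (hmeas k) ?_
    rw [ae_restrict_iff' measurableSet_Ioc]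
    filter_upwards with t ht
    exact (key k t ht).trans (le_abs_self _)
  have hnormint : ∀ k, (∫ t, ‖F k t‖ ∂(volume.restrict (Set.Ioc (0:ℝ) z)))
      ≤ (∫ t in Set.Ioc (0:ℝ) z, t ^ (μ - 1)) * (z ^ (2 * k + 1) / ((2 * k + 1).factorial : ℝ)) := by
    intro k
    rw [← MeasureTheory.integral_mul_const]
    refine integral_mono_ae ((hFint k).norm)
      (hg.mul_const (z ^ (2 * k + 1) / ((2 * k + 1).factorial : ℝ))) ?_
    filter_upwards [ae_restrict_mem measurableSet_Ioc] with t ht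
    exact key k t ht
  have hS : Summable fun k : ℕ => (∫ t in Set.Ioc (0:ℝ) z, t ^ (μ - 1))
      * (z ^ (2 * k + 1) / ((2 * k + 1).factorial : ℝ)) := by
    have hinj : Function.Injective (fun k : ℕ => 2 * k + 1) := fun a b h => by dsimp at h; omega
    exact ((Real.summable_pow_div_factorial z).comp_injective hinj).mul_left _
  have hsum : Summable fun k : ℕ => ∫ t, ‖F k t‖ ∂(volume.restrict (Set.Ioc (0:ℝ) z)) :=
    Summable.of_nonneg_of_le (fun k => integral_nonneg fun t => norm_nonneg _) hnormint hS
  have hswap := MeasureTheory.integral_tsum_of_summable_integral_norm hFint hsum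
  have hpt : ∀ t : ℝ, ∑' k, F k t = t ^ (μ - 1) * Real.sin (z - t) := fun t =>
    ((Real.hasSum_sin (z - t)).mul_left (t ^ (μ - 1))).tsum_eq
  rw [hL, intervalIntegral.integral_of_le hz.le]
  simp_rw [← hpt]
  rw [← hswap]
  refine tsum_congr fun k => ?_
  have hfac : (0:ℝ) < (((2 * k + 1).factorial : ℕ) : ℝ) := by positivity
  have hPne : P (2 * k + 2) ≠ 0 := (ascPochhammer_pos _ _ hμ).ne'
  have hconst : ∀ t : ℝ, F k t
      = ((-1 : ℝ) ^ k / ((2 * k + 1).factorial : ℝ)) * (t ^ (μ - 1) * (z - t) ^ (2 * k + 1)) := by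
    intro t; rw [hF]; ring
  rw [show (∫ t, F k t ∂(volume.restrict (Set.Ioc (0:ℝ) z)))
        = ∫ t in (0:ℝ)..z, F k t from (intervalIntegral.integral_of_le hz.le).symm]
  simp_rw [hconst]
  rw [intervalIntegral.integral_const_mul, beta_aux hμ hz (2 * k + 1), hT]
  simp only [hP]
  have e : μ + ((2 * k + 1 : ℕ) : ℝ) = (μ + 1) + ((2 * k : ℕ) : ℝ) := by push_cast; ring
  have hsplit : z ^ (μ + ((2 * k + 1 : ℕ) : ℝ)) = z ^ (μ + 1 : ℝ) * z ^ (2 * k) := by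
    rw [e, Real.rpow_add hz (μ + 1) ((2 * k : ℕ) : ℝ), Real.rpow_natCast]
  rw [hsplit, show 2 * k + 1 + 1 = 2 * k + 2 from rfl]
  field_simp
end

section
/- Let μ ∈ (0,1). Then for every z > 0, (μ−2)·s_{μ−5/2, 1/2}(z)·s_{μ−1/2, 1/2}(z) − (μ−1)·[s_{μ−3/2, 1/2}(z)]² > 0. -/
open Real

namespace LommelAux

/-- abbreviation for Pochhammer eval -/
noncomputable def P (a : ℝ) (m : ℕ) : ℝ := (ascPochhammer ℝ m).eval a

lemma P_pos {a : ℝ} (ha : 0 < a) (m : ℕ) : 0 < P a m := ascPochhammer_pos m a ha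

lemma P_succ_right (a : ℝ) (m : ℕ) : P a (m + 1) = P a m * (a + m) :=
  ascPochhammer_succ_eval m a

lemma P_succ_left (a : ℝ) (m : ℕ) : P a (m + 1) = a * P (a + 1) m := by
  unfold P
  rw [ascPochhammer_succ_left, Polynomial.eval_mul, Polynomial.eval_X, Polynomial.eval_comp,
    Polynomial.eval_add, Polynomial.eval_X, Polynomial.eval_one]

/-- `a * (a+1)_m = (a+m) * (a)_m` -/
lemma P_cross (a : ℝ) (m : ℕ) : a * P (a + 1) m = (a + m) * P a m := by
  rw [← P_succ_left, P_succ_right, mul_comm]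

/-- `(a)_{m+2} = a*(a+1)*(a+2)_m` -/
lemma P_two_step (a : ℝ) (m : ℕ) : P a (m + 2) = a * (a + 1) * P (a + 2) m := by
  have h1 : P a (m + 2) = a * P (a + 1) (m + 1) := P_succ_left a (m + 1)
  rw [h1, P_succ_left (a + 1) m, ← mul_assoc]
  norm_num [add_assoc]

/-- main summability workhorse: `Σ (2n+1) S^n / (a)_{2n}` converges for `S ≥ 0`. -/
lemma summable_main {a : ℝ} (ha : 0 < a) {S : ℝ} (hS : 0 ≤ S) :
    Summable (fun n : ℕ => ((2 * n + 1 : ℝ)) * S ^ n / P a (2 * n)) := by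
  apply summable_of_ratio_norm_eventually_le (r := 1 / 2) (by norm_num)
  obtain ⟨N, hN⟩ := exists_nat_ge ((6 : ℝ) * (S + 1))
  filter_upwards [Filter.eventually_ge_atTop N] with n hn
  have hn' : (6 : ℝ) * (S + 1) ≤ (n : ℝ) := by
    have : (N : ℝ) ≤ n := by exact_mod_cast hn
    linarith
  have hP : P a (2 * (n + 1)) = P a (2 * n) * ((a + 2 * n) * (a + 2 * n + 1)) := by
    have h1 : 2 * (n + 1) = (2 * n + 1) + 1 := by ring
    rw [h1, P_succ_right, P_succ_right]
    push_cast
    ring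
  have hPpos := P_pos ha (2 * n)
  have hPpos' := P_pos ha (2 * (n + 1))
  have hSn : (0:ℝ) ≤ S ^ n := by positivity
  have hf1 : (0:ℝ) ≤ (2 * ((n:ℝ)+1) + 1) * S ^ (n+1) / P a (2 * (n+1)) := by
    apply div_nonneg _ hPpos'.le
    positivity
  have hf0 : (0:ℝ) ≤ (2 * (n:ℝ) + 1) * S ^ n / P a (2 * n) := by
    apply div_nonneg _ hPpos.le
    positivity
  rw [Real.norm_eq_abs, Real.norm_eq_abs]
  push_cast
  rw [abs_of_nonneg hf1, abs_of_nonneg hf0, hP, pow_succ]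
  rw [div_le_iff₀ (by positivity)]
  have hnn : (0:ℝ) ≤ (n:ℝ) := Nat.cast_nonneg n
  have key : (2 * (n:ℝ) + 3) * S * 2 ≤ (2 * n + 1) * ((a + 2 * n) * (a + 2 * n + 1)) := by
    have e1 : (2 * (n:ℝ) + 3) * S * 2 ≤ 6 * S * (2 * n + 1) := by nlinarith
    have e2 : 6 * S ≤ a + 2 * n := by linarith
    have e3 : (1:ℝ) ≤ a + 2 * n + 1 := by linarith
    have e4 : 6 * S * (2 * (n:ℝ) + 1) ≤ (a + 2 * n) * (2 * n + 1) := by nlinarith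
    nlinarith [mul_le_mul_of_nonneg_left e3 (mul_nonneg (by linarith : (0:ℝ) ≤ (a + 2*n) ) (by linarith : (0:ℝ) ≤ 2*(n:ℝ)+1))]
  have expand : 1 / 2 * ((2 * (n:ℝ) + 1) * S ^ n / P a (2 * n)) * (P a (2 * n) * ((a + 2 * ↑n) * (a + 2 * ↑n + 1)))
      = 1 / 2 * ((2 * (n:ℝ) + 1) * S ^ n) * ((a + 2 * ↑n) * (a + 2 * ↑n + 1)) := by
    field_simp
  rw [expand]
  nlinarith [mul_le_mul_of_nonneg_left key hSn]

/-- the `phi` series, term form -/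
lemma phi_eq (a z : ℝ) : phi a z = ∑' n : ℕ, (-1 : ℝ) ^ n * z ^ (2 * n) / P a (2 * n) := rfl

/-- derivative series of `phi` -/
noncomputable def phiD (a z : ℝ) : ℝ :=
  ∑' n : ℕ, (-1 : ℝ) ^ n * (((2 * n : ℕ) : ℝ) * z ^ (2 * n - 1)) / P a (2 * n)

lemma abs_phi_term {a : ℝ} (ha : 0 < a) (z : ℝ) (n : ℕ) :
    |(-1 : ℝ) ^ n * z ^ (2 * n) / P a (2 * n)| = (z ^ 2) ^ n / P a (2 * n) := by
  have hP := P_pos ha (2 * n)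
  rw [abs_div, abs_of_pos hP, abs_mul, abs_pow, abs_pow, abs_neg, abs_one, one_pow, one_mul,
    pow_mul, sq_abs]

lemma abs_phiD_term {a : ℝ} (ha : 0 < a) (z : ℝ) (n : ℕ) :
    |(-1 : ℝ) ^ n * (((2 * n : ℕ) : ℝ) * z ^ (2 * n - 1)) / P a (2 * n)|
      = ((2 * n : ℕ) : ℝ) * |z| ^ (2 * n - 1) / P a (2 * n) := by
  have hP := P_pos ha (2 * n)
  rw [abs_div, abs_of_pos hP, abs_mul, abs_mul, abs_pow, abs_pow, abs_neg, abs_one, one_pow,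
    one_mul, abs_of_nonneg (show (0:ℝ) ≤ ((2 * n : ℕ) : ℝ) by positivity)]

lemma phiD_num_bound {R z : ℝ} (hR : 1 ≤ R) (hz : |z| ≤ R) (n : ℕ) :
    ((2 * n : ℕ) : ℝ) * |z| ^ (2 * n - 1) ≤ (2 * n + 1) * (R ^ 2) ^ n := by
  have hR0 : (0:ℝ) ≤ R := by linarith
  have h3 : (R ^ 2) ^ n = R ^ (2 * n) := by rw [← pow_mul]
  rcases Nat.eq_zero_or_pos n with h0 | hpos
  · subst h0; simp
  · have h1 : |z| ^ (2 * n - 1) ≤ R ^ (2 * n - 1) := pow_le_pow_left₀ (abs_nonneg z) hz _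
    have h2 : R ^ (2 * n - 1) ≤ R ^ (2 * n) := pow_le_pow_right₀ hR (Nat.sub_le _ _)
    have h4 : ((2 * n : ℕ) : ℝ) ≤ 2 * n + 1 := by push_cast; linarith
    have h5 : (0:ℝ) ≤ |z| ^ (2 * n - 1) := by positivity
    rw [h3]
    calc ((2 * n : ℕ) : ℝ) * |z| ^ (2 * n - 1)
        ≤ ((2 * n : ℕ) : ℝ) * R ^ (2 * n) := by
          apply mul_le_mul_of_nonneg_left (h1.trans h2) (by positivity)
      _ ≤ (2 * n + 1) * R ^ (2 * n) := by
          apply mul_le_mul_of_nonneg_right h4 (by positivity)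

lemma summable_phi {a : ℝ} (ha : 0 < a) (z : ℝ) :
    Summable (fun n : ℕ => (-1 : ℝ) ^ n * z ^ (2 * n) / P a (2 * n)) := by
  apply Summable.of_norm_bounded (summable_main ha (sq_nonneg z))
  intro n
  have hP := P_pos ha (2 * n)
  rw [Real.norm_eq_abs, abs_phi_term ha]
  rw [div_le_div_iff_of_pos_right hP]
  nlinarith [pow_nonneg (sq_nonneg z) n, Nat.cast_nonneg (α := ℝ) n]

lemma summable_phiD {a : ℝ} (ha : 0 < a) {R z : ℝ} (hR : 1 ≤ R) (hz : |z| ≤ R) :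
    Summable (fun n : ℕ => (-1 : ℝ) ^ n * (((2 * n : ℕ) : ℝ) * z ^ (2 * n - 1)) / P a (2 * n)) := by
  apply Summable.of_norm_bounded (summable_main ha (sq_nonneg R))
  intro n
  have hP := P_pos ha (2 * n)
  rw [Real.norm_eq_abs, abs_phiD_term ha, div_le_div_iff_of_pos_right hP]
  exact phiD_num_bound hR hz n

lemma hasDerivAt_phi {a : ℝ} (ha : 0 < a) (z : ℝ) :
    HasDerivAt (phi a) (phiD a z) z := by
  set R := |z| + 1 with hRdef
  have hR1 : (1:ℝ) ≤ R := by rw [hRdef]; linarith [abs_nonneg z]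
  have hmem : z ∈ Set.Ioo (-R) R := by
    rw [Set.mem_Ioo]
    constructor
    · nlinarith [abs_nonneg z, neg_abs_le z]
    · nlinarith [abs_nonneg z, le_abs_self z]
  exact hasDerivAt_tsum_of_isPreconnected
    (u := fun n : ℕ => ((2 * n + 1 : ℝ)) * (R ^ 2) ^ n / P a (2 * n))
    (summable_main ha (sq_nonneg R)) isOpen_Ioo (convex_Ioo _ _).isPreconnected
    (g' := fun n y => (-1 : ℝ) ^ n * (((2 * n : ℕ) : ℝ) * y ^ (2 * n - 1)) / P a (2 * n))
    (fun n y _ => by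
      simpa [mul_div_assoc, P] using
        ((hasDerivAt_pow (2 * n) y).const_mul ((-1 : ℝ) ^ n)).div_const (P a (2 * n)))
    (fun n y hy => by
      have hyR : |y| ≤ R := by
        rw [abs_le]
        exact ⟨(Set.mem_Ioo.1 hy).1.le, (Set.mem_Ioo.1 hy).2.le⟩
      have hP := P_pos ha (2 * n)
      rw [Real.norm_eq_abs, abs_phiD_term ha, div_le_div_iff_of_pos_right hP]
      exact phiD_num_bound hR1 hyR n)
    hmem (summable_phi ha z) hmem

lemma P_zero (a : ℝ) : P a 0 = 1 := by unfold P; simp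

/-- identity I1: `a * phi a z = a * phi (a+1) z + z * phiD (a+1) z` -/
lemma identity_I1 {a : ℝ} (ha : 0 < a) (z : ℝ) :
    a * phi a z = a * phi (a + 1) z + z * phiD (a + 1) z := by
  have ha1 : 0 < a + 1 := by linarith
  have hs1 : Summable (fun n : ℕ => (-1 : ℝ) ^ n * z ^ (2 * n) / P (a + 1) (2 * n)) :=
    summable_phi ha1 z
  have hs2 : Summable (fun n : ℕ =>
      (-1 : ℝ) ^ n * (((2 * n : ℕ) : ℝ) * z ^ (2 * n - 1)) / P (a + 1) (2 * n)) :=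
    summable_phiD ha1 (R := |z| + 1) (by linarith [abs_nonneg z]) (by linarith)
  rw [phi_eq, phi_eq, phiD, ← tsum_mul_left, ← tsum_mul_left, ← tsum_mul_left,
    ← Summable.tsum_add (hs1.mul_left a) (hs2.mul_left z)]
  apply tsum_congr
  intro n
  have hp := (P_pos ha (2 * n)).ne'
  have hq := (P_pos ha1 (2 * n)).ne'
  have hcross : a * P (a + 1) (2 * n) = (a + 2 * n) * P a (2 * n) := by
    have := P_cross a (2 * n)
    push_cast at this ⊢
    linarith
  rcases Nat.eq_zero_or_pos n with h0 | hpos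
  · subst h0
    simp [P_zero]
  · have hzz : z * z ^ (2 * n - 1) = z ^ (2 * n) := by
      rw [← pow_succ']
      congr 1
      omega
    field_simp
    push_cast
    linear_combination (z ^ (2 * n)) * hcross
      - ((2 * (n:ℝ)) * P a (2 * n)) * hzz

/-- identity I2 (recurrence): `phi a z = 1 - z^2 * phi (a+2) z / (a*(a+1))` -/
lemma identity_I2 {a : ℝ} (ha : 0 < a) (z : ℝ) :
    phi a z = 1 - z ^ 2 * phi (a + 2) z / (a * (a + 1)) := by
  have ha1 : (0:ℝ) < a + 1 := by linarith
  have ha2 : (0:ℝ) < a + 2 := by linarith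
  have hs := summable_phi ha z
  rw [phi_eq, Summable.tsum_eq_zero_add hs]
  have h0 : (-1:ℝ) ^ 0 * z ^ (2 * 0) / P a (2 * 0) = 1 := by
    norm_num [P_zero]
  rw [h0]
  have hterm : ∀ n : ℕ, (-1:ℝ) ^ (n + 1) * z ^ (2 * (n + 1)) / P a (2 * (n + 1))
      = (-(z ^ 2) / (a * (a + 1))) * ((-1:ℝ) ^ n * z ^ (2 * n) / P (a + 2) (2 * n)) := by
    intro n
    have hP2 : P a (2 * (n + 1)) = a * (a + 1) * P (a + 2) (2 * n) := by
      rw [show 2 * (n + 1) = 2 * n + 2 by ring]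
      exact P_two_step a (2 * n)
    have hq := (P_pos ha2 (2 * n)).ne'
    have hzz : z ^ (2 * (n + 1)) = z ^ 2 * z ^ (2 * n) := by
      rw [show 2 * (n + 1) = 2 * n + 2 by ring, pow_add]
      ring
    rw [hP2, hzz, pow_succ]
    field_simp
  rw [tsum_congr hterm, tsum_mul_left]
  rw [← phi_eq]
  ring

/-- `(a)_{2n} ≥ 2^n` for `a ≥ 1` -/
lemma P_ge_two_pow {a : ℝ} (ha : 1 ≤ a) (n : ℕ) : (2:ℝ) ^ n ≤ P a (2 * n) := by
  induction n with
  | zero => simp [P_zero]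
  | succ m ih =>
    have h1 : P a (2 * (m + 1)) = P a (2 * m) * ((a + 2 * m) * (a + 2 * m + 1)) := by
      rw [show 2 * (m + 1) = (2 * m + 1) + 1 by ring, P_succ_right, P_succ_right]
      push_cast
      ring
    have h2 : (1:ℝ) ≤ a + 2 * m := by
      have : (0:ℝ) ≤ (m:ℝ) := Nat.cast_nonneg m
      linarith
    have h3 : (2:ℝ) ≤ a + 2 * m + 1 := by linarith
    have hp : (0:ℝ) < (2:ℝ) ^ m := by positivity
    have hPp := P_pos (by linarith : (0:ℝ) < a) (2 * m)
    have h4 : (2:ℝ) ≤ (a + 2 * m) * (a + 2 * m + 1) := by nlinarith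
    rw [h1, pow_succ]
    nlinarith [mul_le_mul_of_nonneg_left h4 hPp.le]

/-- near `z = 0`, `phi a z` is within `z^2` of `1`, for `a ≥ 1`, `0 ≤ z ≤ 1` -/
lemma phi_near_one {a : ℝ} (ha : 1 ≤ a) {z : ℝ} (h0 : 0 ≤ z) (h1 : z ≤ 1) :
    |phi a z - 1| ≤ z ^ 2 := by
  have ha0 : (0:ℝ) < a := by linarith
  have hs := summable_phi ha0 z
  have hphi : phi a z - 1 = ∑' n : ℕ, (-1:ℝ) ^ (n + 1) * z ^ (2 * (n + 1)) / P a (2 * (n + 1)) := by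
    rw [phi_eq, Summable.tsum_eq_zero_add hs]
    norm_num [P_zero]
  rw [hphi]
  have hsub : Summable (fun n : ℕ => (-1:ℝ) ^ (n + 1) * z ^ (2 * (n + 1)) / P a (2 * (n + 1))) :=
    (summable_nat_add_iff 1).2 hs
  have hgeom : Summable (fun n : ℕ => z ^ 2 * (1/2 : ℝ) ^ (n + 1)) := by
    apply Summable.mul_left
    exact (summable_geometric_of_lt_one (by norm_num) (by norm_num)).comp_injective
      (add_left_injective 1) |>.congr (fun n => rfl)
  have hbound : ∀ n : ℕ, |(-1:ℝ) ^ (n + 1) * z ^ (2 * (n + 1)) / P a (2 * (n + 1))|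
      ≤ z ^ 2 * (1/2 : ℝ) ^ (n + 1) := by
    intro n
    rw [abs_phi_term ha0]
    have hP := P_ge_two_pow ha (n + 1)
    have hPpos := P_pos ha0 (2 * (n + 1))
    have hz2 : (z ^ 2) ^ (n + 1) ≤ z ^ 2 := by
      have hz2le : z ^ 2 ≤ 1 := by nlinarith
      have hz2ge : (0:ℝ) ≤ z ^ 2 := sq_nonneg z
      calc (z ^ 2) ^ (n + 1) ≤ 1 ^ (n + 1) * (z ^ 2) := by
            rw [pow_succ]
            apply mul_le_mul_of_nonneg_right _ hz2ge
            exact pow_le_one₀ hz2ge hz2le |>.trans (by norm_num)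
        _ = z ^ 2 := by norm_num
    calc (z ^ 2) ^ (n + 1) / P a (2 * (n + 1)) ≤ (z ^ 2) ^ (n + 1) / (2 ^ (n + 1)) := by
          apply div_le_div_of_nonneg_left (by positivity) (by positivity) hP
      _ ≤ z ^ 2 / (2 ^ (n + 1)) := by
          gcongr
      _ = z ^ 2 * (1/2) ^ (n + 1) := by
          rw [div_eq_mul_inv, one_div, inv_pow]
  have habs : Summable (fun n : ℕ => ‖(-1:ℝ) ^ (n + 1) * z ^ (2 * (n + 1)) / P a (2 * (n + 1))‖) :=
    hsub.abs
  calc |∑' n : ℕ, (-1:ℝ) ^ (n + 1) * z ^ (2 * (n + 1)) / P a (2 * (n + 1))|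
      ≤ ∑' n : ℕ, ‖(-1:ℝ) ^ (n + 1) * z ^ (2 * (n + 1)) / P a (2 * (n + 1))‖ :=
        norm_tsum_le_tsum_norm habs
    _ ≤ ∑' n : ℕ, z ^ 2 * (1/2 : ℝ) ^ (n + 1) :=
        Summable.tsum_le_tsum (fun n => by rw [Real.norm_eq_abs]; exact hbound n) habs hgeom
    _ = z ^ 2 := by
        rw [tsum_mul_left]
        have hg : ∑' n : ℕ, (1/2 : ℝ) ^ (n + 1) = 1 := by
          have : ∀ n : ℕ, (1/2 : ℝ) ^ (n + 1) = (1/2) * (1/2) ^ n := fun n => by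
            rw [pow_succ]; ring
          rw [tsum_congr this, tsum_mul_left, tsum_geometric_of_lt_one (by norm_num) (by norm_num)]
          norm_num
        rw [hg, mul_one]

/-! ### The functions `G`, `G'`, `r` -/

noncomputable def GG (μ z : ℝ) : ℝ := z ^ (μ + 1) * phi (μ + 2) z

noncomputable def GD (μ z : ℝ) : ℝ := (μ + 1) * (z ^ μ * phi (μ + 1) z)

noncomputable def rr (μ z : ℝ) : ℝ := μ * (μ + 1) * z ^ (μ - 1)

noncomputable def rrd (μ z : ℝ) : ℝ := μ * (μ + 1) * (μ - 1) * z ^ (μ - 2)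

variable {μ z : ℝ}

lemma hasDerivAt_GG (hμ : 0 < μ) (hz : 0 < z) : HasDerivAt (GG μ) (GD μ z) z := by
  have h2 : (0:ℝ) < μ + 2 := by linarith
  have h1' : HasDerivAt (fun y : ℝ => y ^ (μ + 1)) ((μ + 1) * z ^ μ) z := by
    have := Real.hasDerivAt_rpow_const (x := z) (p := μ + 1) (Or.inl hz.ne')
    rwa [show μ + 1 - 1 = μ by ring] at this
  have hphi := hasDerivAt_phi h2 z
  have hmul := h1'.mul hphi
  have hI1 := identity_I1 (by linarith : (0:ℝ) < μ + 1) z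
  rw [show μ + 1 + 1 = μ + 2 by ring] at hI1
  have hrw : z ^ (μ + 1) = z ^ μ * z := by
    rw [← Real.rpow_add_one hz.ne' μ]
  refine hmul.congr_deriv (Eq.symm ?_)
  unfold GD
  linear_combination (z ^ μ) * hI1 - phiD (μ + 2) z * hrw

lemma hasDerivAt_GD (hμ : 0 < μ) (hz : 0 < z) :
    HasDerivAt (GD μ) (rr μ z - GG μ z) z := by
  have h1 : (0:ℝ) < μ + 1 := by linarith
  have hrpow : HasDerivAt (fun y : ℝ => y ^ μ) (μ * z ^ (μ - 1)) z :=
    Real.hasDerivAt_rpow_const (x := z) (p := μ) (Or.inl hz.ne')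
  have hphi := hasDerivAt_phi h1 z
  have hmul := (hrpow.mul hphi).const_mul (μ + 1)
  have hI1 := identity_I1 hμ z
  have hI2 := identity_I2 hμ z
  have hrw1 : z ^ μ = z ^ (μ - 1) * z := by
    rw [← Real.rpow_add_one hz.ne' (μ - 1), sub_add_cancel]
  have hrw2 : z ^ (μ + 1) = z ^ (μ - 1) * z ^ 2 := by
    have h := Real.rpow_add hz (μ - 1) 2
    rw [show μ - 1 + 2 = μ + 1 by ring] at h
    rw [h]
    congr 1
    rw [show ((2:ℝ)) = ((2:ℕ):ℝ) by norm_num, Real.rpow_natCast]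
  refine hmul.congr_deriv (Eq.symm ?_)
  unfold rr GG
  have expand : (μ + 1) * (μ * z ^ (μ - 1) * phi (μ + 1) z + z ^ μ * phiD (μ + 1) z)
      = (μ + 1) * z ^ (μ - 1) * (μ * phi (μ + 1) z + z * phiD (μ + 1) z) := by
    rw [hrw1]; ring
  rw [expand, ← hI1, hI2]
  rw [hrw2]
  field_simp

lemma hasDerivAt_rr (μ : ℝ) (hz : 0 < z) : HasDerivAt (rr μ) (rrd μ z) z := by
  have := (Real.hasDerivAt_rpow_const (x := z) (p := μ - 1) (Or.inl hz.ne')).const_mul (μ * (μ + 1))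
  rw [show μ - 1 - 1 = μ - 2 by ring] at this
  refine this.congr_deriv (Eq.symm ?_)
  unfold rrd
  ring

noncomputable def sigma (μ z : ℝ) : ℝ := (GG μ z - rr μ z) ^ 2 + GD μ z ^ 2

lemma hasDerivAt_sigma (hμ : 0 < μ) (hz : 0 < z) :
    HasDerivAt (sigma μ) (-2 * rrd μ z * (GG μ z - rr μ z)) z := by
  have h1 := ((hasDerivAt_GG hμ hz).sub (hasDerivAt_rr μ hz)).pow 2
  have h2 := (hasDerivAt_GD hμ hz).pow 2
  have := h1.add h2
  refine this.congr_deriv (Eq.symm ?_)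
  push_cast [Pi.sub_apply]
  ring

lemma continuousAt_sigma (hμ : 0 < μ) (hz : 0 < z) : ContinuousAt (sigma μ) z :=
  (hasDerivAt_sigma hμ hz).continuousAt

lemma rr_pos (hμ : 0 < μ) (hz : 0 < z) : 0 < rr μ z := by
  unfold rr
  have := Real.rpow_pos_of_pos hz (μ - 1)
  positivity

lemma rrd_neg (hμ : 0 < μ) (hμ1 : μ < 1) (hz : 0 < z) : rrd μ z < 0 := by
  unfold rrd
  have h := Real.rpow_pos_of_pos hz (μ - 2)
  have hneg : μ * (μ + 1) * (μ - 1) < 0 :=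
    mul_neg_of_pos_of_neg (mul_pos hμ (by linarith : (0:ℝ) < μ + 1)) (by linarith : μ - 1 < 0)
  exact mul_neg_of_neg_of_pos hneg h

/-- small-z positivity -/
lemma small_pos (hμ : 0 < μ) (hμ1 : μ < 1) (hz : 0 < z) (hz1 : z ≤ 1)
    (hz7 : z ^ 2 ≤ (1 - μ) / 7) : (rr μ z) ^ 2 < sigma μ z := by
  have h1 : (0:ℝ) < μ + 1 := by linarith
  have hA := phi_near_one (a := μ + 1) (by linarith) hz.le hz1
  have hB := phi_near_one (a := μ + 2) (by linarith) hz.le hz1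
  set A := phi (μ + 1) z with hAdef
  set B := phi (μ + 2) z with hBdef
  have hz2μ : z ^ (μ - 1) * z ^ (μ + 1) = z ^ μ * z ^ μ := by
    rw [← Real.rpow_add hz, ← Real.rpow_add hz]
    ring_nf
  have key : (rr μ z) ^ 2 + z ^ μ * z ^ μ * ((μ + 1) ^ 2 * A ^ 2 - 2 * μ * (μ + 1) * B)
      ≤ sigma μ z := by
    unfold sigma GG GD rr
    have expand : (z ^ (μ + 1) * B - μ * (μ + 1) * z ^ (μ - 1)) ^ 2
        = (z ^ (μ + 1) * B) ^ 2 - 2 * μ * (μ + 1) * (z ^ (μ - 1) * z ^ (μ + 1)) * B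
          + (μ * (μ + 1) * z ^ (μ - 1)) ^ 2 := by ring
    rw [expand, hz2μ]
    nlinarith [sq_nonneg (z ^ (μ + 1) * B), sq_nonneg (z^μ)]
  have hzμpos : 0 < z ^ μ * z ^ μ := by
    have := Real.rpow_pos_of_pos hz μ
    positivity
  have hcore : 0 < (μ + 1) ^ 2 * A ^ 2 - 2 * μ * (μ + 1) * B := by
    have hAl : 1 - z ^ 2 ≤ A := by
      have := abs_le.1 hA
      linarith [this.1]
    have hBu : B ≤ 1 + z ^ 2 := by
      have := abs_le.1 hB
      linarith [this.2]
    have hz20 : 0 ≤ z ^ 2 := sq_nonneg z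
    have hz21 : z ^ 2 ≤ 1 := by nlinarith
    have hApos : 0 ≤ 1 - z ^ 2 := by linarith
    have hAsq : (1 - z ^ 2) ^ 2 ≤ A ^ 2 := by nlinarith
    have hS : 0 < (μ + 1) * (1 - z ^ 2) ^ 2 - 2 * μ * (1 + z ^ 2) := by
      nlinarith [sq_nonneg (z ^ 2)]
    have e1 : (μ + 1) ^ 2 * (1 - z ^ 2) ^ 2 ≤ (μ + 1) ^ 2 * A ^ 2 :=
      mul_le_mul_of_nonneg_left hAsq (by positivity)
    have e2 : 2 * μ * (μ + 1) * B ≤ 2 * μ * (μ + 1) * (1 + z ^ 2) := by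
      apply mul_le_mul_of_nonneg_left hBu (by positivity)
    nlinarith [mul_pos h1 hS]
  nlinarith [mul_pos hzμpos hcore]

/-- the crossing (continuous induction) argument -/
lemma sigma_gt (hμ : 0 < μ) (hμ1 : μ < 1) (hz : 0 < z) : (rr μ z) ^ 2 < sigma μ z := by
  -- choose a small starting point z₀ ≤ z
  set s : ℝ := Real.sqrt ((1 - μ) / 7) with hsdef
  have hs_pos : 0 < s := Real.sqrt_pos.2 (by linarith)
  set z₀ : ℝ := min z (min 1 s) / 2 with hz₀def
  have hz₀pos : 0 < z₀ := by
    apply div_pos _ (by norm_num)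
    exact lt_min hz (lt_min one_pos hs_pos)
  have hz₀le_z : z₀ ≤ z := by
    have h1 : min z (min 1 s) ≤ z := min_le_left _ _
    have h2 : 0 < min z (min 1 s) := lt_min hz (lt_min one_pos hs_pos)
    rw [hz₀def]
    linarith
  have hz₀1 : z₀ ≤ 1 := by
    have h1 : min z (min 1 s) ≤ 1 := (min_le_right _ _).trans (min_le_left _ _)
    have h2 : 0 < min z (min 1 s) := lt_min hz (lt_min one_pos hs_pos)
    rw [hz₀def]; linarith
  have hz₀7 : z₀ ^ 2 ≤ (1 - μ) / 7 := by
    have h1 : z₀ ≤ s := by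
      have : min z (min 1 s) ≤ s := (min_le_right _ _).trans (min_le_right _ _)
      rw [hz₀def]; linarith [hs_pos]
    have h2 : z₀ ^ 2 ≤ s ^ 2 := by nlinarith
    have h3 : s ^ 2 = (1 - μ) / 7 := Real.sq_sqrt (by linarith)
    linarith
  have hstart : (rr μ z₀) ^ 2 < sigma μ z₀ := small_pos hμ hμ1 hz₀pos hz₀1 hz₀7
  -- now show it for all t in [z₀, z]
  by_contra hcon
  push_neg at hcon
  set Aset : Set ℝ := {t | t ∈ Set.Icc z₀ z ∧ sigma μ t ≤ (rr μ t) ^ 2} with hAdef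
  have hApos : ∀ t ∈ Set.Icc z₀ z, 0 < t := fun t ht => lt_of_lt_of_le hz₀pos ht.1
  have hcontOn : ContinuousOn (fun t => sigma μ t - (rr μ t) ^ 2) (Set.Icc z₀ z) := by
    intro t ht
    exact ((continuousAt_sigma hμ (hApos t ht)).sub
      (((hasDerivAt_rr μ (hApos t ht)).continuousAt).pow 2)).continuousWithinAt
  have hAclosed : IsClosed Aset := by
    have : Aset = Set.Icc z₀ z ∩ (fun t => sigma μ t - (rr μ t) ^ 2) ⁻¹' Set.Iic 0 := by
      ext t
      simp only [hAdef, Set.mem_setOf_eq, Set.mem_inter_iff, Set.mem_preimage, Set.mem_Iic]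
      constructor
      · rintro ⟨h1, h2⟩; exact ⟨h1, by linarith⟩
      · rintro ⟨h1, h2⟩; exact ⟨h1, by linarith⟩
    rw [this]
    exact hcontOn.preimage_isClosed_of_isClosed isClosed_Icc isClosed_Iic
  have hAne : Aset.Nonempty := ⟨z, ⟨⟨hz₀le_z, le_refl z⟩, hcon⟩⟩
  have hAbdd : BddBelow Aset := ⟨z₀, fun t ht => ht.1.1⟩
  set w := sInf Aset with hwdef
  have hwmem : w ∈ Aset := hAclosed.csInf_mem hAne hAbdd
  have hw_in : w ∈ Set.Icc z₀ z := hwmem.1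
  have hw_le : sigma μ w ≤ (rr μ w) ^ 2 := hwmem.2
  have hwz₀ : z₀ < w := by
    rcases lt_or_eq_of_le hw_in.1 with h | h
    · exact h
    · exfalso; rw [h] at hstart; linarith
  -- on [z₀, w), sigma > rr²
  have hIco : ∀ t ∈ Set.Ico z₀ w, (rr μ t) ^ 2 < sigma μ t := by
    intro t ht
    by_contra hle
    push_neg at hle
    have htA : t ∈ Aset := ⟨⟨ht.1, le_trans ht.2.le hw_in.2⟩, hle⟩
    have := csInf_le hAbdd htA
    rw [← hwdef] at this
    exact absurd ht.2 (not_lt.2 this)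
  -- ψ = sqrt(sigma) - rr is monotone on [z₀, w]
  set ψ : ℝ → ℝ := fun t => Real.sqrt (sigma μ t) - rr μ t with hψdef
  have hmono : MonotoneOn ψ (Set.Icc z₀ w) := by
    apply monotoneOn_of_deriv_nonneg (convex_Icc z₀ w)
    · intro t ht
      have htpos : 0 < t := lt_of_lt_of_le hz₀pos ht.1
      exact ((Real.continuous_sqrt.continuousAt.comp
        (continuousAt_sigma hμ htpos)).sub (hasDerivAt_rr μ htpos).continuousAt).continuousWithinAt
    · rw [interior_Icc]
      intro t ht
      have htpos : 0 < t := lt_of_lt_of_le hz₀pos ht.1.le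
      have htIco : t ∈ Set.Ico z₀ w := ⟨ht.1.le, ht.2⟩
      have hσpos : 0 < sigma μ t :=
        lt_of_le_of_lt (sq_nonneg _) (hIco t htIco)
      have hsq := (Real.hasDerivAt_sqrt hσpos.ne').comp t (hasDerivAt_sigma hμ htpos)
      exact (hsq.sub (hasDerivAt_rr μ htpos)).differentiableAt.differentiableWithinAt
    · rw [interior_Icc]
      intro t ht
      have htpos : 0 < t := lt_of_lt_of_le hz₀pos ht.1.le
      have htIco : t ∈ Set.Ico z₀ w := ⟨ht.1.le, ht.2⟩
      have hσpos : 0 < sigma μ t := lt_of_le_of_lt (sq_nonneg _) (hIco t htIco)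
      have hsq := (Real.hasDerivAt_sqrt hσpos.ne').comp t (hasDerivAt_sigma hμ htpos)
      have hd : HasDerivAt ψ
          (1 / (2 * Real.sqrt (sigma μ t)) * (-2 * rrd μ t * (GG μ t - rr μ t)) - rrd μ t) t := by
        have := hsq.sub (hasDerivAt_rr μ htpos)
        exact this
      rw [hd.deriv]
      have hsqrtpos : 0 < Real.sqrt (sigma μ t) := Real.sqrt_pos.2 hσpos
      have habs : |GG μ t - rr μ t| ≤ Real.sqrt (sigma μ t) := by
        rw [← Real.sqrt_sq_eq_abs]
        apply Real.sqrt_le_sqrt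
        unfold sigma
        nlinarith [sq_nonneg (GD μ t)]
      have hrd := rrd_neg hμ hμ1 htpos
      have h1 : -(GG μ t - rr μ t) ≤ Real.sqrt (sigma μ t) := by
        cases abs_cases (GG μ t - rr μ t) with
        | inl h => linarith [h.1, habs]
        | inr h => linarith [h.1, habs]
      have expand : 1 / (2 * Real.sqrt (sigma μ t)) * (-2 * rrd μ t * (GG μ t - rr μ t))
          - rrd μ t
          = (-rrd μ t) * ((GG μ t - rr μ t) + Real.sqrt (sigma μ t))
            / Real.sqrt (sigma μ t) := by
        field_simp
        ring
      rw [expand]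
      apply div_nonneg _ hsqrtpos.le
      apply mul_nonneg (by linarith)
      linarith
  have hψz₀ : 0 < ψ z₀ := by
    have hrpos := rr_pos hμ hz₀pos
    have : rr μ z₀ < Real.sqrt (sigma μ z₀) := by
      have h1 : rr μ z₀ = Real.sqrt ((rr μ z₀) ^ 2) := (Real.sqrt_sq hrpos.le).symm
      rw [h1]
      exact Real.sqrt_lt_sqrt (sq_nonneg _) hstart
    simp only [hψdef]
    linarith
  have hψw : ψ w ≤ 0 := by
    have hrpos := rr_pos hμ (lt_of_lt_of_le hz₀pos hw_in.1)
    have : Real.sqrt (sigma μ w) ≤ rr μ w := by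
      have h1 : rr μ w = Real.sqrt ((rr μ w) ^ 2) := (Real.sqrt_sq hrpos.le).symm
      rw [h1]
      exact Real.sqrt_le_sqrt hw_le
    simp only [hψdef]
    linarith
  have hmono_app := hmono (Set.left_mem_Icc.2 hwz₀.le) (Set.right_mem_Icc.2 hwz₀.le) hwz₀.le
  linarith [hψz₀, hψw, hmono_app]

lemma Q_pos (hμ : 0 < μ) (hμ1 : μ < 1) (hz : 0 < z) :
    0 < GD μ z ^ 2 + GG μ z ^ 2 - rr μ z * GG μ z := by
  have h := sigma_gt hμ hμ1 hz
  have hrpos := rr_pos hμ hz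
  unfold sigma at h
  rcases le_or_gt 0 (GG μ z) with hG | hG
  · nlinarith
  · nlinarith [mul_pos hrpos (neg_pos.2 hG)]

/-- positivity of the bracket `B` -/
lemma B_pos (hμ : 0 < μ) (hμ1 : μ < 1) (hz : 0 < z) :
    0 < (μ + 1) ^ 2 * (phi (μ + 1) z) ^ 2 + z ^ 2 * (phi (μ + 2) z) ^ 2
      - μ * (μ + 1) * phi (μ + 2) z := by
  have hQ := Q_pos hμ hμ1 hz
  set X := phi (μ + 2) z with hX
  set Y := phi (μ + 1) z with hY
  have hq : (0:ℝ) < z ^ μ := Real.rpow_pos_of_pos hz μ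
  have g0 : z ^ (μ + 1) = z ^ μ * z := Real.rpow_add_one hz.ne' μ
  have g2 : z ^ (μ - 1) * z = z ^ μ := by
    rw [← Real.rpow_add_one hz.ne' (μ - 1), sub_add_cancel]
  have key1 : GD μ z ^ 2 + GG μ z ^ 2 - rr μ z * GG μ z
      = (z ^ μ * z ^ μ) * ((μ + 1) ^ 2 * Y ^ 2 + z ^ 2 * X ^ 2 - μ * (μ + 1) * X) := by
    unfold GG GD rr
    rw [g0]
    linear_combination (-(μ * (μ + 1) * X * (z ^ μ))) * g2
  rw [key1] at hQ
  by_contra hB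
  push_neg at hB
  nlinarith [mul_nonpos_of_nonneg_of_nonpos (mul_pos hq hq).le hB]

end LommelAux

open LommelAux in
theorem lommel_turan_shifted (μ : ℝ) (hμ₀ : 0 < μ) (hμ₁ : μ < 1) (z : ℝ) (hz : 0 < z) :
    (μ - 2) * lommel (μ - 5/2) z * lommel (μ - 1/2) z -
      (μ - 1) * (lommel (μ - 3/2) z) ^ 2 > 0 := by
  set X := phi (μ + 2) z with hX
  set Y := phi (μ + 1) z with hY
  set W := phi μ z with hWdef
  set E := z ^ (μ - 1/2) with hE
  have hEpos : (0:ℝ) < E := Real.rpow_pos_of_pos hz _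
  have hB := B_pos hμ₀ hμ₁ hz
  rw [← hX, ← hY] at hB
  have hW : W = 1 - z ^ 2 * X / (μ * (μ + 1)) := identity_I2 hμ₀ z
  -- unfold the three lommel values
  have e1 : z ^ (μ - 5/2 + 1) = E / z := by
    rw [hE, show μ - 5/2 + 1 = (μ - 1/2) - 1 by ring, Real.rpow_sub_one hz.ne']
  have e2 : z ^ (μ - 3/2 + 1) = E := by rw [hE, show μ - 3/2 + 1 = μ - 1/2 by ring]
  have e3 : z ^ (μ - 1/2 + 1) = E * z := by
    rw [hE, Real.rpow_add_one hz.ne']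
  have l1 : lommel (μ - 5/2) z = (E / z) / ((μ - 2) * (μ - 1)) * W := by
    unfold lommel
    rw [e1, show μ - 5/2 + 1/2 = μ - 2 by ring, show μ - 5/2 + 3/2 = μ - 1 by ring,
      show μ - 5/2 + 5/2 = μ by ring, ← hWdef]
  have l2 : lommel (μ - 3/2) z = E / ((μ - 1) * μ) * Y := by
    unfold lommel
    rw [e2, show μ - 3/2 + 1/2 = μ - 1 by ring, show μ - 3/2 + 3/2 = μ by ring,
      show μ - 3/2 + 5/2 = μ + 1 by ring, ← hY]
  have l3 : lommel (μ - 1/2) z = (E * z) / (μ * (μ + 1)) * X := by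
    unfold lommel
    rw [e3, show μ - 1/2 + 1/2 = μ by ring, show μ - 1/2 + 3/2 = μ + 1 by ring,
      show μ - 1/2 + 5/2 = μ + 2 by ring, ← hX]
  rw [l1, l2, l3]
  have hμ2 : μ - 2 ≠ 0 := by linarith
  have hμ1' : μ - 1 ≠ 0 := by linarith
  have hμ0' : μ ≠ 0 := by linarith
  have hμp1 : μ + 1 ≠ 0 := by linarith
  have hT : (μ - 2) * ((E / z) / ((μ - 2) * (μ - 1)) * W) * ((E * z) / (μ * (μ + 1)) * X)
      - (μ - 1) * (E / ((μ - 1) * μ) * Y) ^ 2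
      = E * E * ((μ + 1) ^ 2 * Y ^ 2 + z ^ 2 * X ^ 2 - μ * (μ + 1) * X)
        / ((1 - μ) * μ ^ 2 * (μ + 1) ^ 2) := by
    rw [hW]
    have h1μ : (1:ℝ) - μ ≠ 0 := by linarith
    field_simp
    ring
  rw [hT]
  apply div_pos (by nlinarith [mul_pos hEpos hEpos])
  have : (0:ℝ) < 1 - μ := by linarith
  positivity
end

section
/- (Monotone form of l'Hospital's rule) Let a < b be real numbers and let f, g : ℝ → ℝ be differentiable on (a,b). Assume that g′(x) > 0 for all x ∈ (a,b), that f(x) → 0 and g(x) → 0 as x → a from the right, and that x ↦ f′(x)/g′(x) is strictly increasing on (a,b). Then x ↦ f(x)/g(x) is strictly increasing on (a,b). -/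
theorem monotone_lhospital (a b : ℝ) (hab : a < b) (f g : ℝ → ℝ)
    (hf : ∀ x ∈ Set.Ioo a b, DifferentiableAt ℝ f x)
    (hg : ∀ x ∈ Set.Ioo a b, DifferentiableAt ℝ g x)
    (hg' : ∀ x ∈ Set.Ioo a b, 0 < deriv g x)
    (hf0 : Filter.Tendsto f (nhdsWithin a (Set.Ioo a b)) (nhds 0))
    (hg0 : Filter.Tendsto g (nhdsWithin a (Set.Ioo a b)) (nhds 0))
    (hmono : StrictMonoOn (fun x => deriv f x / deriv g x) (Set.Ioo a b)) :
    StrictMonoOn (fun x => f x / g x) (Set.Ioo a b) := by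
  haveI hNB : (nhdsWithin a (Set.Ioo a b)).NeBot := by
    apply mem_closure_iff_nhdsWithin_neBot.mp
    rw [closure_Ioo hab.ne]
    exact Set.left_mem_Icc.mpr hab.le
  -- g is strictly monotone on (a,b)
  have hgmono : StrictMonoOn g (Set.Ioo a b) := by
    apply strictMonoOn_of_deriv_pos (convex_Ioo a b)
    · exact fun z hz => (hg z hz).continuousAt.continuousWithinAt
    · rw [interior_Ioo]; exact hg'
  -- g is positive on (a,b)
  have hgpos : ∀ x ∈ Set.Ioo a b, 0 < g x := by
    have hnn : ∀ x ∈ Set.Ioo a b, 0 ≤ g x := by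
      intro x hx
      refine le_of_tendsto hg0 ?_
      filter_upwards [self_mem_nhdsWithin,
        inter_mem_nhdsWithin (Set.Ioo a b) (Iio_mem_nhds hx.1)] with t ht ht'
      exact (hgmono ht hx ht'.2).le
    intro x hx
    have hmid : (a + x) / 2 ∈ Set.Ioo a b :=
      ⟨by linarith [hx.1], by linarith [hx.1, hx.2]⟩
    have : (a + x) / 2 < x := by linarith [hx.1]
    exact lt_of_le_of_lt (hnn _ hmid) (hgmono hmid hx this)
  -- Cauchy MVT on subintervals of (a,b)
  have hmvt : ∀ t ∈ Set.Ioo a b, ∀ x ∈ Set.Ioo a b, t < x →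
      ∃ c ∈ Set.Ioo t x, (g x - g t) * deriv f c = (f x - f t) * deriv g c := by
    intro t ht x hx htx
    have hsub : Set.Icc t x ⊆ Set.Ioo a b := fun z hz =>
      ⟨lt_of_lt_of_le ht.1 hz.1, lt_of_le_of_lt hz.2 hx.2⟩
    have hsub' : Set.Ioo t x ⊆ Set.Ioo a b := Set.Subset.trans Set.Ioo_subset_Icc_self hsub
    exact exists_ratio_deriv_eq_ratio_slope f htx
      (fun z hz => (hf z (hsub hz)).continuousAt.continuousWithinAt)
      (fun z hz => (hf z (hsub' hz)).differentiableWithinAt) g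
      (fun z hz => (hg z (hsub hz)).continuousAt.continuousWithinAt)
      (fun z hz => (hg z (hsub' hz)).differentiableWithinAt)
  -- f x / g x ≤ deriv f x / deriv g x on (a,b)
  have hkey : ∀ x ∈ Set.Ioo a b, f x / g x ≤ deriv f x / deriv g x := by
    intro x hx
    have hlim : Filter.Tendsto (fun t => (f x - f t) / (g x - g t))
        (nhdsWithin a (Set.Ioo a b)) (nhds (f x / g x)) := by
      have h1 : Filter.Tendsto (fun t => f x - f t) (nhdsWithin a (Set.Ioo a b))
          (nhds (f x - 0)) := Filter.Tendsto.sub tendsto_const_nhds hf0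
      have h2 : Filter.Tendsto (fun t => g x - g t) (nhdsWithin a (Set.Ioo a b))
          (nhds (g x - 0)) := Filter.Tendsto.sub tendsto_const_nhds hg0
      have := h1.div h2 (by simpa using (hgpos x hx).ne')
      simp only [sub_zero] at this; exact this
    refine le_of_tendsto hlim ?_
    filter_upwards [self_mem_nhdsWithin,
      inter_mem_nhdsWithin (Set.Ioo a b) (Iio_mem_nhds hx.1)] with t ht ht'
    obtain ⟨c, hc, hceq⟩ := hmvt t ht x hx ht'.2
    have hcab : c ∈ Set.Ioo a b := ⟨lt_trans ht.1 hc.1, lt_trans hc.2 hx.2⟩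
    have hgt : 0 < g x - g t := sub_pos.mpr (hgmono ht hx ht'.2)
    have h1 : (f x - f t) / (g x - g t) = deriv f c / deriv g c := by
      rw [div_eq_div_iff hgt.ne' (hg' c hcab).ne']
      linarith [hceq]
    rw [h1]
    exact (hmono hcab hx hc.2).le
  -- main argument
  intro x hx y hy hxy
  simp only
  obtain ⟨c, hc, hceq⟩ := hmvt x hx y hy hxy
  have hcab : c ∈ Set.Ioo a b := ⟨lt_trans hx.1 hc.1, lt_trans hc.2 hy.2⟩
  have hgx := hgpos x hx
  have hgy := hgpos y hy
  have hg'x := hg' x hx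
  have hg'c := hg' c hcab
  have hgxy : 0 < g y - g x := sub_pos.mpr (hgmono hx hy hxy)
  rw [div_lt_div_iff₀ hgx hgy]
  -- from hkey: f x * deriv g x ≤ deriv f x * g x
  have h1 : f x * deriv g x ≤ deriv f x * g x := by
    have := hkey x hx
    rwa [div_le_div_iff₀ hgx hg'x] at this
  -- from hmono: deriv f x * deriv g c < deriv f c * deriv g x
  have h2 : deriv f x * deriv g c < deriv f c * deriv g x := by
    have := hmono hx hcab hc.1
    simp only at this
    rwa [div_lt_div_iff₀ hg'x hg'c] at this
  -- combine: f x * deriv g c < deriv f c * g x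
  have h3 : f x * deriv g c < deriv f c * g x := by
    nlinarith [mul_le_mul_of_nonneg_right h1 hg'c.le,
      mul_lt_mul_of_pos_right h2 hgx]
  nlinarith [mul_lt_mul_of_pos_right h3 hgxy, hceq, hg'c, hgxy]
end

section
/- Define Δ(z) = [s_{3/2,1/2}(z)]² − s_{1/2,1/2}(z)·s_{5/2,1/2}(z) for z > 0. Then for every z > 0, z·Δ(z) = (z²−4)·cos z + cos² z − 2z·sin z + 3; consequently, for every positive integer n, Δ((2n−1)π) < 0 and Δ(2nπ) > 0, so Δ has infinitely many changes of sign on (0,∞). -/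
open Real

/-- The Turán expression `Δ(z) = [s_{3/2,1/2}(z)]² − s_{1/2,1/2}(z)·s_{5/2,1/2}(z)`. -/
noncomputable def turanDelta (z : ℝ) : ℝ :=
  (lommel (3/2) z) ^ 2 - lommel (1/2) z * lommel (5/2) z

open Nat

lemma poch3 (n : ℕ) : (ascPochhammer ℝ n).eval 3 = (n + 2)! / 2 := by
  induction n with
  | zero => simp [Nat.factorial]
  | succ n ih =>
    rw [ascPochhammer_succ_right]
    have : (n + 1 + 2)! = (n + 3) * (n + 2)! := rfl
    simp only [Polynomial.eval_mul, Polynomial.eval_add, Polynomial.eval_X,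
      Polynomial.eval_natCast, ih, this]
    push_cast
    ring

lemma poch4 (n : ℕ) : (ascPochhammer ℝ n).eval 4 = (n + 3)! / 6 := by
  induction n with
  | zero => simp [Nat.factorial]
  | succ n ih =>
    rw [ascPochhammer_succ_right]
    have : (n + 1 + 3)! = (n + 4) * (n + 3)! := rfl
    simp only [Polynomial.eval_mul, Polynomial.eval_add, Polynomial.eval_X,
      Polynomial.eval_natCast, ih, this]
    push_cast
    ring

lemma poch5 (n : ℕ) : (ascPochhammer ℝ n).eval 5 = (n + 4)! / 24 := by
  induction n with
  | zero => simp [Nat.factorial]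
  | succ n ih =>
    rw [ascPochhammer_succ_right]
    have : (n + 1 + 4)! = (n + 5) * (n + 4)! := rfl
    simp only [Polynomial.eval_mul, Polynomial.eval_add, Polynomial.eval_X,
      Polynomial.eval_natCast, ih, this]
    push_cast
    ring

lemma phi3 {z : ℝ} (hz : z ≠ 0) : phi 3 z = 2 * (1 - Real.cos z) / z ^ 2 := by
  have hc := Real.hasSum_cos z
  -- shifted cos series
  have hs : HasSum (fun n : ℕ => (-1 : ℝ) ^ (n + 1) * z ^ (2 * (n + 1)) / ((2 * (n + 1))! : ℝ))
      (Real.cos z - 1) := by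
    have := (hasSum_nat_add_iff' (f := fun n : ℕ => (-1 : ℝ) ^ n * z ^ (2 * n) / ((2 * n)! : ℝ))
      (g := Real.cos z) 1).2 hc
    simpa using this
  have key : HasSum (fun n : ℕ => (-1 : ℝ) ^ n * z ^ (2 * n) / (ascPochhammer ℝ (2 * n)).eval 3)
      (2 * (1 - Real.cos z) / z ^ 2) := by
    have h := hs.mul_left (-2 / z ^ 2)
    rw [show -2 / z ^ 2 * (Real.cos z - 1) = 2 * (1 - Real.cos z) / z ^ 2 by
      field_simp; ring] at h
    convert h using 1
    · rfl
    funext n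
    rw [poch3]
    have h2 : ((Nat.factorial (2 * n + 2) : ℝ)) ≠ 0 := by positivity
    rw [show 2 * (n + 1) = 2 * n + 2 by ring]
    field_simp
    rw [pow_succ]
    ring
  exact key.tsum_eq

lemma phi4 {z : ℝ} (hz : z ≠ 0) : phi 4 z = 6 * (z - Real.sin z) / z ^ 3 := by
  have hc := Real.hasSum_sin z
  have hs : HasSum (fun n : ℕ => (-1 : ℝ) ^ (n + 1) * z ^ (2 * (n + 1) + 1) / ((2 * (n + 1) + 1)! : ℝ))
      (Real.sin z - z) := by
    have := (hasSum_nat_add_iff' (f := fun n : ℕ => (-1 : ℝ) ^ n * z ^ (2 * n + 1) / ((2 * n + 1)! : ℝ))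
      (g := Real.sin z) 1).2 hc
    simpa using this
  have key : HasSum (fun n : ℕ => (-1 : ℝ) ^ n * z ^ (2 * n) / (ascPochhammer ℝ (2 * n)).eval 4)
      (6 * (z - Real.sin z) / z ^ 3) := by
    have h := hs.mul_left (-6 / z ^ 3)
    rw [show -6 / z ^ 3 * (Real.sin z - z) = 6 * (z - Real.sin z) / z ^ 3 by
      field_simp; ring] at h
    convert h using 1
    · rfl
    funext n
    rw [poch4]
    have h2 : ((Nat.factorial (2 * n + 3) : ℝ)) ≠ 0 := by positivity
    rw [show 2 * (n + 1) + 1 = 2 * n + 3 by ring]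
    field_simp
    rw [pow_succ]
    ring
  exact key.tsum_eq

lemma phi5 {z : ℝ} (hz : z ≠ 0) :
    phi 5 z = 24 * (Real.cos z - 1 + z ^ 2 / 2) / z ^ 4 := by
  have hc := Real.hasSum_cos z
  have hs : HasSum (fun n : ℕ => (-1 : ℝ) ^ (n + 2) * z ^ (2 * (n + 2)) / ((2 * (n + 2))! : ℝ))
      (Real.cos z - (1 - z ^ 2 / 2)) := by
    have := (hasSum_nat_add_iff' (f := fun n : ℕ => (-1 : ℝ) ^ n * z ^ (2 * n) / ((2 * n)! : ℝ))
      (g := Real.cos z) 2).2 hc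
    have e : ∑ i ∈ Finset.range 2, (-1 : ℝ) ^ i * z ^ (2 * i) / ((2 * i)! : ℝ) = 1 - z ^ 2 / 2 := by
      simp [Finset.sum_range_succ, Nat.factorial]
      ring
    rw [e] at this
    exact this
  have key : HasSum (fun n : ℕ => (-1 : ℝ) ^ n * z ^ (2 * n) / (ascPochhammer ℝ (2 * n)).eval 5)
      (24 * (Real.cos z - 1 + z ^ 2 / 2) / z ^ 4) := by
    have h := hs.mul_left (24 / z ^ 4)
    rw [show 24 / z ^ 4 * (Real.cos z - (1 - z ^ 2 / 2)) =
        24 * (Real.cos z - 1 + z ^ 2 / 2) / z ^ 4 by field_simp; ring] at h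
    convert h using 1
    · rfl
    funext n
    rw [poch5]
    have h2 : ((Nat.factorial (2 * n + 4) : ℝ)) ≠ 0 := by positivity
    rw [show 2 * (n + 2) = 2 * n + 4 by ring]
    field_simp
    rw [pow_add, pow_succ]
    ring
  exact key.tsum_eq

lemma main_identity {z : ℝ} (hz : 0 < z) : z * turanDelta z =
    (z ^ 2 - 4) * Real.cos z + (Real.cos z) ^ 2 - 2 * z * Real.sin z + 3 := by
  have hz0 : z ≠ 0 := ne_of_gt hz
  set A := z ^ ((1 : ℝ)/2) with hAdef
  have hA : A ^ 2 = z := by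
    rw [hAdef, sq, ← Real.rpow_add hz]; norm_num
  have h32 : z ^ ((3 : ℝ)/2) = z * A := by
    rw [hAdef, show (3:ℝ)/2 = ((1:ℕ):ℝ) + 1/2 by norm_num, Real.rpow_add hz,
      Real.rpow_natCast, pow_one]
  have h52 : z ^ ((5 : ℝ)/2) = z ^ 2 * A := by
    rw [hAdef, show (5:ℝ)/2 = ((2:ℕ):ℝ) + 1/2 by norm_num, Real.rpow_add hz,
      Real.rpow_natCast]
  have h72 : z ^ ((7 : ℝ)/2) = z ^ 3 * A := by
    rw [hAdef, show (7:ℝ)/2 = ((3:ℕ):ℝ) + 1/2 by norm_num, Real.rpow_add hz,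
      Real.rpow_natCast]
  have e1 : lommel (1/2) z = z * A / 2 * (2 * (1 - Real.cos z) / z ^ 2) := by
    unfold lommel
    rw [show (1/2 : ℝ) + 5/2 = 3 by norm_num, phi3 hz0,
      show (1/2 : ℝ) + 1 = 3/2 by norm_num, h32]
    norm_num
  have e2 : lommel (3/2) z = z ^ 2 * A / 6 * (6 * (z - Real.sin z) / z ^ 3) := by
    unfold lommel
    rw [show (3/2 : ℝ) + 5/2 = 4 by norm_num, phi4 hz0,
      show (3/2 : ℝ) + 1 = 5/2 by norm_num, h52]
    norm_num
  have e3 : lommel (5/2) z = z ^ 3 * A / 12 * (24 * (Real.cos z - 1 + z ^ 2 / 2) / z ^ 4) := by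
    unfold lommel
    rw [show (5/2 : ℝ) + 5/2 = 5 by norm_num, phi5 hz0,
      show (5/2 : ℝ) + 1 = 7/2 by norm_num, h72]
    norm_num
  have hsc := Real.sin_sq_add_cos_sq z
  unfold turanDelta
  rw [e1, e2, e3]
  have expand : z * ((z ^ 2 * A / 6 * (6 * (z - Real.sin z) / z ^ 3)) ^ 2 -
      z * A / 2 * (2 * (1 - Real.cos z) / z ^ 2) *
        (z ^ 3 * A / 12 * (24 * (Real.cos z - 1 + z ^ 2 / 2) / z ^ 4))) =
      (z * A ^ 2 / z ^ 2) * ((z - Real.sin z) ^ 2 -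
        (1 - Real.cos z) * (2 * (Real.cos z - 1) + z ^ 2)) := by
    field_simp
    ring
  rw [expand, hA]
  field_simp
  nlinarith [hsc]

theorem turanDelta_sign_changes :
    (∀ z : ℝ, 0 < z → z * turanDelta z =
      (z ^ 2 - 4) * Real.cos z + (Real.cos z) ^ 2 - 2 * z * Real.sin z + 3) ∧
    (∀ n : ℕ, 1 ≤ n →
      turanDelta ((2 * (n : ℝ) - 1) * Real.pi) < 0 ∧
      0 < turanDelta (2 * (n : ℝ) * Real.pi)) := by
  constructor
  · exact fun z hz => main_identity hz
  · intro n hn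
    have hpi := Real.pi_gt_three
    have hn1 : (1 : ℝ) ≤ (n : ℝ) := by exact_mod_cast hn
    constructor
    · -- z = (2n-1)π, cos = -1, sin = 0
      set z : ℝ := (2 * (n : ℝ) - 1) * Real.pi with hzdef
      have hzpos : 0 < z := by
        apply mul_pos _ Real.pi_pos
        linarith
      have hcos : Real.cos z = -1 := by
        rw [hzdef, show (2 * (n : ℝ) - 1) * Real.pi = Real.pi + (n - 1) * (2 * Real.pi) by ring]
        rw [show ((n : ℝ) - 1) = ((n - 1 : ℕ) : ℝ) by push_cast [hn]; ring]
        rw [Real.cos_add_nat_mul_two_pi, Real.cos_pi]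
      have hsin : Real.sin z = 0 := by
        rw [hzdef, show (2 * (n : ℝ) - 1) * Real.pi = Real.pi + (n - 1) * (2 * Real.pi) by ring]
        rw [show ((n : ℝ) - 1) = ((n - 1 : ℕ) : ℝ) by push_cast [hn]; ring]
        rw [Real.sin_add_nat_mul_two_pi, Real.sin_pi]
      have hid := main_identity hzpos
      rw [hcos, hsin] at hid
      have hz3 : 3 ≤ z := by
        rw [hzdef]
        nlinarith
      have : z * turanDelta z = 8 - z ^ 2 := by rw [hid]; ring
      nlinarith [this, hzpos, hz3]
    · set z : ℝ := 2 * (n : ℝ) * Real.pi with hzdef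
      have hzpos : 0 < z := by
        apply mul_pos _ Real.pi_pos
        linarith
      have hcos : Real.cos z = 1 := by
        rw [hzdef, show 2 * (n : ℝ) * Real.pi = 0 + (n : ℝ) * (2 * Real.pi) by ring]
        rw [show ((n : ℝ)) = ((n : ℕ) : ℝ) by norm_cast,
          Real.cos_add_nat_mul_two_pi, Real.cos_zero]
      have hsin : Real.sin z = 0 := by
        rw [hzdef, show 2 * (n : ℝ) * Real.pi = 0 + (n : ℝ) * (2 * Real.pi) by ring]
        rw [show ((n : ℝ)) = ((n : ℕ) : ℝ) by norm_cast,
          Real.sin_add_nat_mul_two_pi, Real.sin_zero]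
      have hid := main_identity hzpos
      rw [hcos, hsin] at hid
      have : z * turanDelta z = z ^ 2 := by rw [hid]; ring
      nlinarith [this, hzpos]
end
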